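/- arXiv:1402.5193 — 4 statements merged into one kernel-verified Lean document; each statement's English description precedes it below -/
import Mathlib

section
/- For every j with 0 ≤ j ≤ ν and every real x ≥ 0 one has φ^j_{L/K}(x) = min{ h + v_L(binom(h+n, p^{j₀})) + p^{j₀} x : 0 ≤ j₀ ≤ j, a_h ≠ 0 }. -/
open scoped ENNReal

noncomputable section

/-- The additive valuation (with respect to powers of the prime element `π`) of an
element `x` of a discrete valuation ring: the largest `k` with `x ∈ (π^k)`
(`⊤` if `x = 0`). -/
def piVal {A : Type*} [CommRing A] (π : A) (x : A) : ℕ∞ :=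
  ⨆ k ∈ {k : ℕ | x ∈ Ideal.span {π ^ k}}, (k : ℕ∞)

/-- `ĩ_j = min {h ≥ 0 : v_p(h+n) ≤ j, a_h ≠ 0}` (`⊤` if no such `h` exists), where
`a_h` are the coefficients of the series `F̂(X) = Σ a_h X^{h+n}` with `π_K = F̂(π_L)`. -/
def itilde (p n : ℕ) {OK : Type*} [CommRing OK] (aF : ℕ → OK) (j : ℕ) : ℕ∞ :=
  ⨅ h ∈ {h : ℕ | padicValNat p (h + n) ≤ j ∧ aF h ≠ 0}, (h : ℕ∞)

/-- The `j`-th index of inseparability (closed form of the recursion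
`i_ν = ĩ_ν = 0`, `i_j = min(ĩ_j, i_{j+1} + v_L(p))`):
`i_j = min {ĩ_{j₁} + (j₁−j)·v_L(p) : j ≤ j₁ ≤ ν}`.  Here `vLp = v_L(p)`. -/
def insepIdx (p n ν : ℕ) {OK : Type*} [CommRing OK] (aF : ℕ → OK) (vLp : ℕ∞) (j : ℕ) : ℕ∞ :=
  ⨅ j1 ∈ Set.Icc j ν, (itilde p n aF j1 + ((j1 - j : ℕ) : ℕ∞) * vLp)

/-- The generalized Hasse–Herbrand function
`φ^j_{L/K}(x) = min {i_{j₀} + p^{j₀} x : 0 ≤ j₀ ≤ j}`, given the (finite,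
natural-number valued) indices of inseparability `iL`. -/
def hhPhi (p : ℕ) (iL : ℕ → ℕ) (j : ℕ) (x : ℝ) : ℝ :=
  sInf {y : ℝ | ∃ j0 ≤ j, y = iL j0 + (p : ℝ) ^ j0 * x}

/-! ### Auxiliary lemmas -/

section Aux

set_option linter.unusedSectionVars false

/-- If `j ≤ v_p(m)` then `v_p (C(m, p^j)) = v_p m - j` (no carries below position `j`,
and exactly `v_p m - j` carries in positions `j, …, v_p m - 1`, by Kummer's theorem). -/
theorem valChooseP {p : ℕ} [hp : Fact p.Prime] {m j : ℕ} (hm : m ≠ 0)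
    (hj : j ≤ padicValNat p m) :
    padicValNat p (m.choose (p ^ j)) = padicValNat p m - j := by
  have hp1 : 1 < p := hp.out.one_lt
  set t := padicValNat p m with ht
  have hpt : p ^ t ∣ m := pow_padicValNat_dvd
  have hptm : p ^ t ≤ m := Nat.le_of_dvd (Nat.pos_of_ne_zero hm) hpt
  have hpj : p ^ j ≤ m := le_trans (Nat.pow_le_pow_right (le_of_lt hp1) hj) hptm
  have hb : Nat.log p m < m + 1 := Nat.lt_succ_of_le (Nat.log_le_self p m)
  have htm : t ≤ Nat.log p m := Nat.le_log_of_pow_le hp1 hptm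
  rw [padicValNat_choose hpj hb]
  have key : ∀ i ∈ Finset.Ico 1 (m+1),
      (p ^ i ≤ p ^ j % p ^ i + (m - p ^ j) % p ^ i ↔ (j < i ∧ i ≤ t)) := by
    intro i _
    have hPpos : 0 < p ^ i := pow_pos (lt_trans one_pos hp1) i
    rcases le_or_gt i j with hij | hij
    · have h1 : p ^ j % p ^ i = 0 :=
        Nat.mod_eq_zero_of_dvd (pow_dvd_pow p hij)
      have h2 : (m - p ^ j) % p ^ i = 0 :=
        Nat.mod_eq_zero_of_dvd
          (Nat.dvd_sub (dvd_trans (pow_dvd_pow p (le_trans hij hj)) hpt)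
            (pow_dvd_pow p hij))
      simp only [h1, h2]
      omega
    · have h1 : p ^ j % p ^ i = p ^ j :=
        Nat.mod_eq_of_lt (Nat.pow_lt_pow_right hp1 hij)
      have hji : p ^ j < p ^ i := Nat.pow_lt_pow_right hp1 hij
      have hj0 : 0 < p ^ j := pow_pos (by omega) _
      rcases le_or_gt i t with hit | hit
      · obtain ⟨qq, hqq⟩ : p ^ i ∣ m := dvd_trans (pow_dvd_pow p hit) hpt
        have hqq1 : 1 ≤ qq := by
          rcases Nat.eq_zero_or_pos qq with h | h
          · exact absurd (by simp [hqq, h]) hm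
          · exact h
        obtain ⟨q, rfl⟩ : ∃ q, qq = q + 1 := ⟨qq - 1, by omega⟩
        have hm2 : m = p ^ i * q + p ^ i := by rw [hqq]; ring
        have hsub : m - p ^ j = p ^ i * q + (p ^ i - p ^ j) := by omega
        have h2 : (m - p ^ j) % p ^ i = p ^ i - p ^ j := by
          rw [hsub, Nat.mul_add_mod, Nat.mod_eq_of_lt (by omega)]
        simp only [h1, h2]
        omega
      · set r := m % p ^ i with hr
        have hdvdr : p ^ t ∣ r := (Nat.dvd_mod_iff (pow_dvd_pow p (le_of_lt hit))).2 hpt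
        have hrne : r ≠ 0 := by
          intro h0
          have h3 : p ^ i ∣ m := Nat.dvd_of_mod_eq_zero h0
          exact pow_succ_padicValNat_not_dvd hm (dvd_trans (pow_dvd_pow p hit) h3)
        have hrge : p ^ j ≤ r := le_trans (Nat.pow_le_pow_right (le_of_lt hp1) hj)
          (Nat.le_of_dvd (Nat.pos_of_ne_zero hrne) hdvdr)
        have hrlt : r < p ^ i := Nat.mod_lt _ hPpos
        have hm' : m = p ^ i * (m / p ^ i) + r := (Nat.div_add_mod m (p ^ i)).symm
        have hsub : m - p ^ j = p ^ i * (m / p ^ i) + (r - p ^ j) := by omega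
        have h2 : (m - p ^ j) % p ^ i = r - p ^ j := by
          rw [hsub, Nat.mul_add_mod, Nat.mod_eq_of_lt (by omega)]
        simp only [h1, h2]
        omega
  rw [Finset.filter_congr key]
  have heq : Finset.filter (fun i => j < i ∧ i ≤ t) (Finset.Ico 1 (m+1)) = Finset.Ioc j t := by
    ext i
    simp only [Finset.mem_filter, Finset.mem_Ico, Finset.mem_Ioc]
    have : t ≤ m := le_trans htm (Nat.log_le_self p m)
    omega
  rw [heq, Nat.card_Ioc]

variable {A : Type*} [CommRing A] [IsDomain A] [IsDiscreteValuationRing A] {π : A}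

theorem piVal_zero (π : A) : piVal π (0 : A) = ⊤ := by
  have h : ∀ k : ℕ, (0 : A) ∈ Ideal.span {π ^ k} := fun k => Ideal.zero_mem _
  rw [piVal]
  simp only [Set.mem_setOf_eq, h, iSup_pos]
  by_contra htop
  obtain ⟨m, hm⟩ := WithTop.ne_top_iff_exists.1 htop
  have h1 : ((m + 1 : ℕ) : ℕ∞) ≤ ⨆ k : ℕ, (k : ℕ∞) := le_iSup (fun k : ℕ => (k : ℕ∞)) (m+1)
  rw [← hm] at h1
  exact absurd (Nat.cast_le.1 h1) (by omega)

theorem piVal_pow_mul_unit (hπ : Irreducible π) (k : ℕ) (u : Aˣ) :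
    piVal π (π ^ k * u) = k := by
  have hmem : ∀ k' : ℕ, (π ^ k * u : A) ∈ Ideal.span {π ^ k'} ↔ k' ≤ k := by
    intro k'
    rw [Ideal.mem_span_singleton, Units.dvd_mul_right,
      pow_dvd_pow_iff hπ.ne_zero hπ.not_isUnit]
  apply le_antisymm
  · refine iSup₂_le fun k' hk' => ?_
    exact Nat.cast_le.2 ((hmem k').1 hk')
  · exact le_iSup₂ (f := fun (k' : ℕ)
      (_ : k' ∈ {k' : ℕ | (π ^ k * u : A) ∈ Ideal.span {π ^ k'}}) => (k' : ℕ∞)) k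
      ((hmem k).2 le_rfl)

theorem piVal_unit (hπ : Irreducible π) (u : Aˣ) : piVal π (u : A) = 0 := by
  simpa using piVal_pow_mul_unit hπ 0 u

theorem isUnit_natCast_of_coprime {p : ℕ}
    (hpm : (p : A) ∈ IsLocalRing.maximalIdeal A) {u : ℕ} (hu : Nat.Coprime u p) :
    IsUnit (u : A) := by
  obtain ⟨x, y, hxy⟩ := (Nat.isCoprime_iff_coprime.2 hu : IsCoprime (u : ℤ) (p : ℤ))
  by_contra hnu
  have hum : (u : A) ∈ IsLocalRing.maximalIdeal A := hnu
  have h1 : (1 : A) ∈ IsLocalRing.maximalIdeal A := by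
    have := congrArg (fun z : ℤ => (z : A)) hxy
    push_cast at this
    rw [← this]
    exact add_mem (Ideal.mul_mem_left _ _ hum) (Ideal.mul_mem_left _ _ hpm)
  exact (IsLocalRing.maximalIdeal.isMaximal A).ne_top
    (Ideal.eq_top_of_isUnit_mem _ h1 isUnit_one)

theorem piVal_natCast (hπ : Irreducible π) (p : ℕ) [hp : Fact p.Prime]
    (hpm : (p : A) ∈ IsLocalRing.maximalIdeal A) {c : ℕ} (hc : c ≠ 0) :
    piVal π (c : A) = (padicValNat p c : ℕ∞) * piVal π (p : A) := by
  set s := padicValNat p c with hs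
  obtain ⟨u, hu⟩ : p ^ s ∣ c := pow_padicValNat_dvd
  have hpu : ¬ p ∣ u := by
    intro ⟨w, hw⟩
    have hdvd : p ^ (s + 1) ∣ c := ⟨w, by rw [hu, hw]; ring⟩
    exact pow_succ_padicValNat_not_dvd hc hdvd
  have huA : IsUnit (u : A) :=
    isUnit_natCast_of_coprime hpm (Nat.Coprime.symm ((hp.out.coprime_iff_not_dvd).2 hpu))
  obtain ⟨uu, huu⟩ := huA
  have hcA : (c : A) = (p : A) ^ s * (uu : A) := by rw [hu, huu]; push_cast; ring
  rcases eq_or_ne ((p : A)) 0 with hp0 | hp0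
  · rcases Nat.eq_zero_or_pos s with hs0 | hs0
    · rw [hcA, hs0, pow_zero, one_mul, piVal_unit hπ, Nat.cast_zero, zero_mul]
    · have : (c : A) = 0 := by rw [hcA, hp0, zero_pow (by omega), zero_mul]
      rw [this, piVal_zero, hp0, piVal_zero]
      exact (WithTop.mul_top (by exact_mod_cast hs0.ne' : (s : ℕ∞) ≠ 0)).symm
  · obtain ⟨k, w, hw⟩ := IsDiscreteValuationRing.eq_unit_mul_pow_irreducible hp0 hπ
    have hpv : piVal π (p : A) = k := by
      rw [hw, mul_comm]; exact piVal_pow_mul_unit hπ k w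
    have hcA2 : (c : A) = π ^ (k * s) * ((w ^ s * uu : Aˣ) : A) := by
      rw [hcA, hw, Units.val_mul, Units.val_pow_eq_pow_val, mul_pow, ← pow_mul]
      ring
    rw [hcA2, piVal_pow_mul_unit hπ, hpv, ← Nat.cast_mul, mul_comm s k]

variable {p n ν : ℕ} {OK : Type*} [CommRing OK] {aF : ℕ → OK} {e : ℕ∞}

theorem itilde_le {j h : ℕ} (hh : padicValNat p (h + n) ≤ j) (ha : aF h ≠ 0) :
    itilde p n aF j ≤ h :=
  iInf₂_le h ⟨hh, ha⟩

theorem insepIdx_le {j0 j1 : ℕ} (hj1 : j0 ≤ j1) (h1ν : j1 ≤ ν) :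
    insepIdx p n ν aF e j0 ≤ itilde p n aF j1 + ((j1 - j0 : ℕ) : ℕ∞) * e :=
  iInf₂_le j1 ⟨hj1, h1ν⟩

theorem coreLE [hp : Fact p.Prime] (hn : 0 < n) (hν : padicValNat p n = ν)
    (ha0 : aF 0 ≠ 0) {j0 : ℕ} (hj0 : j0 ≤ ν) {h : ℕ} (hah : aF h ≠ 0) :
    insepIdx p n ν aF e j0
      ≤ (h : ℕ∞) + (padicValNat p ((h + n).choose (p ^ j0)) : ℕ∞) * e := by
  set t := padicValNat p (h + n) with ht
  rcases le_or_gt t j0 with htj | htj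
  · calc insepIdx p n ν aF e j0
        ≤ itilde p n aF j0 + ((j0 - j0 : ℕ) : ℕ∞) * e := insepIdx_le le_rfl hj0
      _ = itilde p n aF j0 := by simp
      _ ≤ (h : ℕ∞) := itilde_le htj hah
      _ ≤ _ := le_self_add
  · have hE : padicValNat p ((h + n).choose (p ^ j0)) = t - j0 :=
      valChooseP (by omega) (le_of_lt htj)
    rw [hE]
    rcases le_or_gt t ν with htν | htν
    · calc insepIdx p n ν aF e j0
          ≤ itilde p n aF t + ((t - j0 : ℕ) : ℕ∞) * e := insepIdx_le (le_of_lt htj) htν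
        _ ≤ (h : ℕ∞) + ((t - j0 : ℕ) : ℕ∞) * e :=
            add_le_add_left (itilde_le le_rfl hah) _
    · have h0 : itilde p n aF ν ≤ (0 : ℕ) := itilde_le (by simp [hν]) ha0
      calc insepIdx p n ν aF e j0
          ≤ itilde p n aF ν + ((ν - j0 : ℕ) : ℕ∞) * e := insepIdx_le hj0 le_rfl
        _ ≤ 0 + ((ν - j0 : ℕ) : ℕ∞) * e := add_le_add_left (by simpa using h0) _
        _ = ((ν - j0 : ℕ) : ℕ∞) * e := zero_add _
        _ ≤ ((t - j0 : ℕ) : ℕ∞) * e := mul_le_mul_left (Nat.cast_le.2 (by omega)) e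
        _ ≤ _ := le_add_self

theorem coreGE [hp : Fact p.Prime] (hn : 0 < n) {j0 : ℕ} (hj0 : j0 ≤ ν)
    (hfin : insepIdx p n ν aF e j0 ≠ ⊤) :
    ∃ j0' ≤ j0, ∃ h : ℕ, aF h ≠ 0 ∧
      (h : ℕ∞) + (padicValNat p ((h + n).choose (p ^ j0')) : ℕ∞) * e
        ≤ insepIdx p n ν aF e j0 := by
  set f : ℕ → ℕ∞ := fun j1 => itilde p n aF j1 + ((j1 - j0 : ℕ) : ℕ∞) * e with hf
  obtain ⟨j1, hj1mem, hj1min⟩ :=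
    Set.exists_min_image (Set.Icc j0 ν) f (Set.finite_Icc _ _) ⟨j0, by simp [hj0]⟩
  have hfle : f j1 ≤ insepIdx p n ν aF e j0 := le_iInf₂ fun b hb => hj1min b hb
  have hitne : itilde p n aF j1 ≠ ⊤ := by
    intro htop
    apply hfin
    have h2 := hfle
    rw [hf] at h2
    simp only [htop, top_add] at h2
    exact top_le_iff.1 h2
  have hSne : {h : ℕ | padicValNat p (h + n) ≤ j1 ∧ aF h ≠ 0}.Nonempty := by
    by_contra hS
    apply hitne
    rw [Set.not_nonempty_iff_eq_empty] at hS
    rw [itilde, hS]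
    simp
  set hstar := sInf {h : ℕ | padicValNat p (h + n) ≤ j1 ∧ aF h ≠ 0} with hhs
  obtain ⟨hmem1, hmem2⟩ := Nat.sInf_mem hSne
  have hle_it : (hstar : ℕ∞) ≤ itilde p n aF j1 :=
    le_iInf₂ fun h hh => Nat.cast_le.2 (Nat.sInf_le hh)
  set t := padicValNat p (hstar + n) with htdef
  refine ⟨min j0 t, min_le_left _ _, hstar, hmem2, ?_⟩
  have hE : padicValNat p ((hstar + n).choose (p ^ (min j0 t))) = t - min j0 t :=
    valChooseP (by omega) (min_le_right _ _)
  rw [hE]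
  calc (hstar : ℕ∞) + ((t - min j0 t : ℕ) : ℕ∞) * e
      ≤ itilde p n aF j1 + ((j1 - j0 : ℕ) : ℕ∞) * e := by
        refine add_le_add hle_it (mul_le_mul_left (Nat.cast_le.2 ?_) e)
        have : t ≤ j1 := hmem1
        omega
    _ ≤ insepIdx p n ν aF e j0 := hfle

end Aux

/-- Proposition `newdef`.
With `K` a local field with perfect residue field of characteristic `p`,
`L/K` a finite separable totally ramified extension of degree `n = a·p^ν > 1`
(`p ∤ a`), `F̂(X) = Σ_h a_h X^{h+n}` the unique series with Teichmüller
coefficients such that `π_K = F̂(π_L)`, and `i_0, …, i_ν` the indices of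
inseparability: for `0 ≤ j ≤ ν` and every real `x ≥ 0`,
`φ^j_{L/K}(x) = min { h + v_L(binom (h+n) (p^{j₀})) + p^{j₀} x : 0 ≤ j₀ ≤ j, a_h ≠ 0 }`. -/
theorem stmt1
    (p : ℕ) [hp : Fact p.Prime]
    -- the ring of integers of K : complete DVR with perfect residue field of char p
    (OK : Type) [CommRing OK] [IsDomain OK] [IsDiscreteValuationRing OK]
    [IsAdicComplete (IsLocalRing.maximalIdeal OK) OK]
    [CharP (IsLocalRing.ResidueField OK) p] [PerfectRing (IsLocalRing.ResidueField OK) p]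
    -- the ring of integers of L
    (OL : Type) [CommRing OL] [IsDomain OL] [IsDiscreteValuationRing OL]
    [IsAdicComplete (IsLocalRing.maximalIdeal OL) OL]
    [Algebra OK OL]
    -- the fields K and L
    (K L : Type) [Field K] [Field L]
    [Algebra OK K] [IsFractionRing OK K]
    [Algebra OL L] [IsFractionRing OL L]
    [Algebra K L] [Algebra OK L] [IsScalarTower OK K L] [IsScalarTower OK OL L]
    -- L/K is finite separable of degree n = a·p^ν with p ∤ a, n > 1
    [Algebra.IsSeparable K L] [FiniteDimensional K L]
    (n a ν : ℕ) (hna : n = a * p ^ ν) (hpa : ¬ p ∣ a) (hn1 : 1 < n)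
    (hdeg : Module.finrank K L = n)
    -- uniformizers; L/K is totally ramified
    (πK : OK) (hπK : Irreducible πK) (πL : OL) (hπL : Irreducible πL)
    (htot : Associated (algebraMap OK OL πK) (πL ^ n))
    (hres : ∀ x : OL, ∃ y : OK, x - algebraMap OK OL y ∈ IsLocalRing.maximalIdeal OL)
    -- Teichmüller representatives
    (TR : Set OK) (hTR0 : (0 : OK) ∈ TR)
    (hTRbij : Set.BijOn (IsLocalRing.residue OK) TR Set.univ)
    (hTRmul : ∀ r ∈ TR, ∀ s ∈ TR, r * s ∈ TR)
    -- the series F̂(X) = Σ_h a_h X^{h+n} with π_K = F̂(π_L)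
    (aF : ℕ → OK) (haF : ∀ h, aF h ∈ TR)
    (hFeval : ∀ N : ℕ,
      algebraMap OK OL πK - ∑ h ∈ Finset.range N, algebraMap OK OL (aF h) * πL ^ (h + n)
        ∈ Ideal.span {πL ^ (n + N)})
    -- the indices of inseparability (finite since L/K is separable)
    (iL : ℕ → ℕ)
    (hiL : ∀ j ≤ ν, (iL j : ℕ∞) = insepIdx p n ν aF (piVal πL (p : OL)) j)
    (j : ℕ) (hj : j ≤ ν) (x : ℝ) (hx : 0 ≤ x) :
    ENNReal.ofReal (hhPhi p iL j x) =
      ⨅ (j0 : ℕ) (_ : j0 ≤ j) (h : ℕ) (_ : aF h ≠ 0),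
        ((h : ℝ≥0∞) + (piVal πL (((h + n).choose (p ^ j0) : ℕ) : OL) : ℝ≥0∞)
          + (p : ℝ≥0∞) ^ j0 * ENNReal.ofReal x) := by
  have hn : 0 < n := by omega
  have ha' : a ≠ 0 := fun h => hpa (h ▸ dvd_zero p)
  have hν : padicValNat p n = ν := by
    rw [hna, padicValNat.mul ha' (pow_ne_zero _ hp.out.pos.ne'),
      padicValNat.eq_zero_of_not_dvd hpa, padicValNat.prime_pow, zero_add]
  -- a_0 ≠ 0
  have ha0 : aF 0 ≠ 0 := by
    intro h0
    have h1 := hFeval 1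
    simp only [Finset.range_one, Finset.sum_singleton, h0, map_zero, zero_mul,
      sub_zero] at h1
    rw [Ideal.mem_span_singleton] at h1
    obtain ⟨u, hu⟩ := htot
    have hdvd : πL ^ (n + 1) ∣ πL ^ n := dvd_trans h1 ⟨u, hu.symm⟩
    rw [pow_dvd_pow_iff hπL.ne_zero hπL.not_isUnit] at hdvd
    omega
  -- (p : OL) lies in the maximal ideal
  have hpOK : (p : OK) ∈ IsLocalRing.maximalIdeal OK := by
    have hres0 : IsLocalRing.residue OK (p : OK) = 0 := by
      rw [map_natCast]; exact CharP.cast_eq_zero _ p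
    exact Ideal.Quotient.eq_zero_iff_mem.1 hres0
  have hpm : (p : OL) ∈ IsLocalRing.maximalIdeal OL := by
    rw [hπL.maximalIdeal_eq, Ideal.mem_span_singleton]
    obtain ⟨c, hc⟩ := Ideal.mem_span_singleton.1 (hπK.maximalIdeal_eq ▸ hpOK)
    obtain ⟨u, hu⟩ := htot
    have hpc : (p : OL) = algebraMap OK OL πK * algebraMap OK OL c := by
      rw [← map_mul, ← hc, map_natCast]
    rw [hpc]
    have hdL : πL ∣ algebraMap OK OL πK := by
      have heq : algebraMap OK OL πK = πL ^ n * ↑u⁻¹ :=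
        (Units.eq_mul_inv_iff_mul_eq u).2 hu
      rw [heq]
      exact Dvd.dvd.mul_right (dvd_pow_self πL hn.ne') _
    exact hdL.mul_right _
  set e := piVal πL (p : OL) with he
  -- the binomial coefficients are nonzero; bridge piVal to padicValNat
  have hchoosene : ∀ j0 h : ℕ, j0 ≤ ν → (h + n).choose (p ^ j0) ≠ 0 := by
    intro j0 h hj0
    have h1 : p ^ j0 ≤ n := by
      calc p ^ j0 ≤ p ^ ν := Nat.pow_le_pow_right hp.out.pos hj0
        _ ≤ a * p ^ ν := Nat.le_mul_of_pos_left _ (Nat.pos_of_ne_zero ha')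
        _ = n := hna.symm
    exact (Nat.choose_pos (le_trans h1 (Nat.le_add_left n h))).ne'
  have hbridge : ∀ j0 h : ℕ, j0 ≤ ν →
      piVal πL (((h + n).choose (p ^ j0) : ℕ) : OL)
        = (padicValNat p ((h + n).choose (p ^ j0)) : ℕ∞) * e :=
    fun j0 h hj0 => piVal_natCast hπL p hpm (hchoosene j0 h hj0)
  -- the real-side minimum
  set g : ℕ → ℝ := fun j0 => (iL j0 : ℝ) + (p : ℝ) ^ j0 * x with hg
  obtain ⟨js, hjsmem, hmin⟩ :=
    Finset.exists_min_image (Finset.Iic j) g ⟨j, Finset.mem_Iic.2 le_rfl⟩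
  rw [Finset.mem_Iic] at hjsmem
  have hsinf : hhPhi p iL j x = g js := by
    refine IsLeast.csInf_eq ⟨⟨js, hjsmem, rfl⟩, ?_⟩
    rintro y ⟨j0, hj0, rfl⟩
    exact hmin j0 (Finset.mem_Iic.2 hj0)
  have hofReal : ∀ j0 : ℕ, ENNReal.ofReal (g j0)
      = (iL j0 : ℝ≥0∞) + (p : ℝ≥0∞) ^ j0 * ENNReal.ofReal x := by
    intro j0
    rw [hg]
    rw [ENNReal.ofReal_add (Nat.cast_nonneg _)
      (mul_nonneg (pow_nonneg (Nat.cast_nonneg _) _) hx),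
      ENNReal.ofReal_natCast, ENNReal.ofReal_mul (pow_nonneg (Nat.cast_nonneg _) _),
      ENNReal.ofReal_pow (Nat.cast_nonneg _), ENNReal.ofReal_natCast]
  rw [show hhPhi p iL j x = g js from hsinf, hofReal js]
  apply le_antisymm
  · -- LHS ≤ RHS
    refine le_iInf fun j0 => le_iInf fun hj0 => le_iInf fun h => le_iInf fun hah => ?_
    have hcore : (iL j0 : ℕ∞)
        ≤ (h : ℕ∞) + piVal πL (((h + n).choose (p ^ j0) : ℕ) : OL) := by
      rw [hbridge j0 h (hj0.trans hj), hiL j0 (hj0.trans hj)]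
      exact coreLE hn hν ha0 (hj0.trans hj) hah
    have hcore' : (iL j0 : ℝ≥0∞)
        ≤ (h : ℝ≥0∞) + (piVal πL (((h + n).choose (p ^ j0) : ℕ) : OL) : ℝ≥0∞) := by
      have h2 := ENat.toENNReal_le.2 hcore
      rwa [ENat.toENNReal_add, ENat.toENNReal_coe] at h2
    calc (iL js : ℝ≥0∞) + (p : ℝ≥0∞) ^ js * ENNReal.ofReal x
        ≤ (iL j0 : ℝ≥0∞) + (p : ℝ≥0∞) ^ j0 * ENNReal.ofReal x := by
          rw [← hofReal js, ← hofReal j0]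
          exact ENNReal.ofReal_le_ofReal (hmin j0 (Finset.mem_Iic.2 hj0))
      _ ≤ _ := add_le_add_left hcore' _
  · -- RHS ≤ LHS
    have hfin : insepIdx p n ν aF e js ≠ ⊤ := by
      rw [← hiL js (hjsmem.trans hj)]
      exact WithTop.coe_ne_top
    obtain ⟨j0', hj0'le, hstar, hah, hle⟩ := coreGE hn (hjsmem.trans hj) hfin
    have hj0'j : j0' ≤ j := hj0'le.trans hjsmem
    have hcore : (hstar : ℕ∞) + piVal πL (((hstar + n).choose (p ^ j0') : ℕ) : OL)
        ≤ (iL js : ℕ∞) := by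
      rw [hbridge j0' hstar (hj0'le.trans (hjsmem.trans hj)), hiL js (hjsmem.trans hj)]
      exact hle
    have hcore' : (hstar : ℝ≥0∞)
          + (piVal πL (((hstar + n).choose (p ^ j0') : ℕ) : OL) : ℝ≥0∞)
        ≤ (iL js : ℝ≥0∞) := by
      have h2 := ENat.toENNReal_le.2 hcore
      rwa [ENat.toENNReal_add, ENat.toENNReal_coe] at h2
    refine le_trans (iInf_le_of_le j0' (iInf_le_of_le hj0'j
      (iInf_le_of_le hstar (iInf_le_of_le hah le_rfl)))) ?_
    refine add_le_add hcore' (mul_le_mul_left ?_ _)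
    exact pow_le_pow_right₀ (by exact_mod_cast hp.out.one_le) hj0'le
end
end

section
/- Let 0 ≤ j ≤ ν, let d ≥ c ≥ 0 be integers, let u ∈ O_L[ε_j]^× be a unit, and choose F(X) ∈ X^n·O_K[[X]] with F(π_L) = π_K. Then the following are equivalent: (1) F(π_L + u π_L^{c+1} ε_j) ≡ π_K (mod π_L^{n+d}); (2) there exists an A_d-algebra homomorphism s_d : B_d → B_d[ε_j] with s_d(π_L) = π_L + u π_L^{c+1} ε_j; (3) there exists an A_d-algebra homomorphism s_d : B_d → B_d[ε_j] with s_d ≡ id_{B_d} (mod π_L^{c+1} ε_j) and s_d ≢ id_{B_d} (mod π_L^{c+1} ε_j·(π_L, ε_j)). -/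
noncomputable section

/-- The ring `A[ε] = A[X]/(X^e)`; for `e = p^(j+1)` this is `A[ε_j]`. -/
abbrev EpsRing (A : Type*) [CommRing A] (e : ℕ) : Type _ :=
  Polynomial A ⧸ (Ideal.span {(Polynomial.X : Polynomial A) ^ e})

/-- The nilpotent element `ε` of `A[X]/(X^e)`. -/
def eps (A : Type*) [CommRing A] (e : ℕ) : EpsRing A e :=
  Ideal.Quotient.mk _ Polynomial.X

/-- The canonical map `A → A[X]/(X^e)`. -/
def epsC (A : Type*) [CommRing A] (e : ℕ) : A →+* EpsRing A e :=
  (Ideal.Quotient.mk _).comp Polynomial.C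

/-- Functoriality of `A ↦ A[X]/(X^e)` in `A`. -/
def epsMap {A B : Type*} [CommRing A] [CommRing B] (f : A →+* B) (e : ℕ) :
    EpsRing A e →+* EpsRing B e :=
  Ideal.Quotient.lift _ ((Ideal.Quotient.mk _).comp (Polynomial.mapRingHom f))
    (by
      intro a ha
      rw [Ideal.mem_span_singleton] at ha
      obtain ⟨g, rfl⟩ := ha
      rw [RingHom.comp_apply, Ideal.Quotient.eq_zero_iff_mem, Ideal.mem_span_singleton]
      simp only [Polynomial.coe_mapRingHom, Polynomial.map_mul, Polynomial.map_pow,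
        Polynomial.map_X]
      exact Dvd.intro _ rfl)

namespace EpsAux

open Polynomial

variable {A B : Type*} [CommRing A] [CommRing B] {e : ℕ}

/-- shorthand for the quotient map `A[X] → A[ε]`. -/
def emk (A : Type*) [CommRing A] (e : ℕ) : Polynomial A →+* EpsRing A e :=
  Ideal.Quotient.mk _

lemma emk_surj : Function.Surjective (emk A e) := Ideal.Quotient.mk_surjective

lemma emk_eq_zero {P : A[X]} : emk A e P = 0 ↔ (X : A[X]) ^ e ∣ P := by
  rw [emk, Ideal.Quotient.eq_zero_iff_mem, Ideal.mem_span_singleton]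

lemma emk_eq_emk {P Q : A[X]} : emk A e P = emk A e Q ↔ (X : A[X]) ^ e ∣ P - Q := by
  rw [emk, Ideal.Quotient.eq, Ideal.mem_span_singleton]

lemma epsC_eq (a : A) : epsC A e a = emk A e (C a) := rfl

lemma eps_eq : eps A e = emk A e X := rfl

lemma eps_pow_eq_zero (he : 0 < e) : (eps A e) ^ e = 0 := by
  rw [eps_eq, ← map_pow, emk_eq_zero]

lemma eps_pow_eq_zero' (he : 0 < e) {k : ℕ} (hk : e ≤ k) : (eps A e) ^ k = 0 := by
  rw [← Nat.sub_add_cancel hk, pow_add, eps_pow_eq_zero he, mul_zero]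

lemma epsMap_emk (f : A →+* B) (P : A[X]) :
    epsMap f e (emk A e P) = emk B e (P.map f) := rfl

lemma epsMap_epsC (f : A →+* B) (a : A) :
    epsMap f e (epsC A e a) = epsC B e (f a) := by
  rw [epsC_eq, epsMap_emk, map_C, epsC_eq]

lemma epsMap_eps (f : A →+* B) : epsMap f e (eps A e) = eps B e := by
  rw [eps_eq, epsMap_emk, map_X, eps_eq]

/-- Kernel of `epsMap f e` when `ker f = (a)`. -/
lemma epsMap_eq_zero_iff (f : A →+* B) (hf : Function.Surjective f) (a : A)
    (hker : RingHom.ker f = Ideal.span {a}) (x : EpsRing A e) :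
    epsMap f e x = 0 ↔ x ∈ Ideal.span {epsC A e a} := by
  constructor
  · intro hx
    obtain ⟨P, rfl⟩ := emk_surj (A := A) (e := e) x
    rw [epsMap_emk, emk_eq_zero] at hx
    obtain ⟨Hbar, hH⟩ := hx
    obtain ⟨H, rfl⟩ := Polynomial.map_surjective f hf Hbar
    have h0 : (P - X ^ e * H).map f = 0 := by
      simp [Polynomial.map_sub, hH]
    have hdvd : C a ∣ P - X ^ e * H := by
      rw [Polynomial.C_dvd_iff_dvd_coeff]
      intro i
      rw [← Ideal.mem_span_singleton, ← hker, RingHom.mem_ker]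
      rw [← Polynomial.coeff_map, h0, Polynomial.coeff_zero]
    obtain ⟨G, hG⟩ := hdvd
    rw [Ideal.mem_span_singleton]
    refine ⟨emk A e G, ?_⟩
    have : emk A e P = emk A e (C a * G) + emk A e (X ^ e * H) := by
      rw [← map_add, ← hG]; ring_nf
    rw [this, epsC_eq, ← map_mul]
    have hz : emk A e (X ^ e * H) = 0 := by
      rw [emk_eq_zero]; exact Dvd.intro _ rfl
    rw [hz, add_zero]
  · intro hx
    rw [Ideal.mem_span_singleton] at hx
    obtain ⟨g, rfl⟩ := hx
    rw [map_mul, epsMap_epsC]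
    have : f a = 0 := by
      rw [← RingHom.mem_ker, hker, Ideal.mem_span_singleton]
    simp [this]

end EpsAux

open Polynomial

section Arith
variable {OK OL : Type} [CommRing OK] [IsDomain OK] [IsDiscreteValuationRing OK]
  [CommRing OL] [IsDomain OL] [IsDiscreteValuationRing OL] [Algebra OK OL]

/-- L1: digit extraction. -/
lemma digit_lemma (πK : OK) (hπK : Irreducible πK) (πL : OL) (hπL : Irreducible πL)
    {n : ℕ} (htot : Associated (algebraMap OK OL πK) (πL ^ n)) :
    ∀ r ≤ n, ∀ a : ℕ → OK,
      (∑ i ∈ Finset.range r, algebraMap OK OL (a i) * πL ^ i) ∈ Ideal.span {πL ^ r} →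
      ∀ i < r, a i ∈ Ideal.span {πK} := by
  intro r
  induction r with
  | zero => intro _ a _ i hi; omega
  | succ r ih =>
    intro hrn a hsum i hi
    obtain ⟨t, ht⟩ := htot.symm
    -- ht : πL ^ n * t = algebraMap OK OL πK
    have hsplit : (∑ i ∈ Finset.range (r+1), algebraMap OK OL (a i) * πL ^ i)
        = πL * (∑ i ∈ Finset.range r, algebraMap OK OL (a (i+1)) * πL ^ i)
          + algebraMap OK OL (a 0) := by
      rw [Finset.sum_range_succ']
      rw [Finset.mul_sum]
      congr 1
      refine Finset.sum_congr rfl fun x _ => ?_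
      rw [pow_succ]
      ring_nf
      · rw [pow_zero, mul_one]
    -- a 0 is a nonunit
    have ha0 : a 0 ∈ Ideal.span {πK} := by
      rw [← hπK.maximalIdeal_eq]
      by_contra hu
      have hunit : IsUnit (a 0) := by
        by_contra h
        exact hu (IsLocalRing.mem_maximalIdeal _ |>.mpr h)
      obtain ⟨y, hy⟩ := Ideal.mem_span_singleton.mp hsum
      have : algebraMap OK OL (a 0) = πL * (πL ^ r * y
          - ∑ i ∈ Finset.range r, algebraMap OK OL (a (i+1)) * πL ^ i) := by
        rw [hsplit, pow_succ] at hy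
        ring_nf
        ring_nf at hy
        linear_combination hy
      have : IsUnit (πL * (πL ^ r * y
          - ∑ i ∈ Finset.range r, algebraMap OK OL (a (i+1)) * πL ^ i)) := by
        rw [← this]; exact hunit.map (algebraMap OK OL)
      exact hπL.not_isUnit (isUnit_of_mul_isUnit_left this)
    -- write a 0 = πK * b
    obtain ⟨b, hb⟩ := Ideal.mem_span_singleton.mp ha0
    obtain ⟨y, hy⟩ := Ideal.mem_span_singleton.mp hsum
    -- peel off one power of πL
    have hn1 : 1 ≤ n := le_trans (by omega) hrn
    have hkey : πL * (∑ i ∈ Finset.range r, algebraMap OK OL (a (i+1)) * πL ^ i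
        + πL ^ (n-1) * (↑t * algebraMap OK OL b)) = πL * (πL ^ r * y) := by
      have halg : algebraMap OK OL (a 0) = πL * (πL ^ (n-1) * (↑t * algebraMap OK OL b)) := by
        rw [hb, map_mul, ← ht]
        have : πL ^ n = πL * πL ^ (n - 1) := by
          rw [← pow_succ']
          congr 1; omega
        rw [this]; ring
      rw [hsplit, halg, pow_succ] at hy
      linear_combination hy
    have hcanc := mul_left_cancel₀ hπL.ne_zero hkey
    have hT : (∑ i ∈ Finset.range r, algebraMap OK OL (a (i+1)) * πL ^ i)
        ∈ Ideal.span {πL ^ r} := by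
      rw [Ideal.mem_span_singleton]
      refine ⟨y - πL ^ (n-1-r) * (↑t * algebraMap OK OL b), ?_⟩
      have : πL ^ (n-1) = πL ^ r * πL ^ (n-1-r) := by
        rw [← pow_add]; congr 1; omega
      rw [this] at hcanc
      linear_combination hcanc
    rcases Nat.eq_zero_or_pos i with hi0 | hipos
    · subst hi0; exact ha0
    · have := ih (le_trans (Nat.le_succ r) hrn) (fun i => a (i+1)) hT (i-1) (by omega)
      simpa [Nat.sub_add_cancel hipos] using this

end Arith

section Approx
variable {OK OL : Type} [CommRing OK]
  [CommRing OL] [IsDomain OL] [IsDiscreteValuationRing OL] [Algebra OK OL]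

/-- L3: polynomial approximation of elements of `OL` by polynomials in `πL` over `OK`. -/
lemma poly_approx (πL : OL) (hπL : Irreducible πL)
    (hres : ∀ x : OL, ∃ y : OK, x - algebraMap OK OL y ∈ IsLocalRing.maximalIdeal OL) :
    ∀ (m : ℕ) (x : OL), ∃ f : OK[X], x - Polynomial.aeval πL f ∈ Ideal.span {πL ^ m} := by
  intro m
  induction m with
  | zero =>
    intro x
    exact ⟨0, by simp [Ideal.span_singleton_one]⟩
  | succ m ih =>
    intro x
    obtain ⟨y, hy⟩ := hres x
    rw [hπL.maximalIdeal_eq, Ideal.mem_span_singleton] at hy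
    obtain ⟨x', hx'⟩ := hy
    obtain ⟨f', hf'⟩ := ih x'
    rw [Ideal.mem_span_singleton] at hf'
    obtain ⟨y', hy'⟩ := hf'
    refine ⟨C y + X * f', ?_⟩
    rw [Ideal.mem_span_singleton]
    refine ⟨y', ?_⟩
    have : (Polynomial.aeval πL) (C y + X * f')
        = algebraMap OK OL y + πL * (Polynomial.aeval πL f') := by
      simp [mul_comm]
    rw [this, pow_succ']
    linear_combination hx' + πL * hy'

end Approx

section ClaimB
variable {OK OL : Type} [CommRing OK] [IsDomain OK] [IsDiscreteValuationRing OK]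
  [CommRing OL] [IsDomain OL] [IsDiscreteValuationRing OL] [Algebra OK OL]

/-- L2: description of polynomials vanishing to high order at `πL`. -/
lemma mem_span_G_pow (πK : OK) (hπK : Irreducible πK) (πL : OL) (hπL : Irreducible πL)
    {n N : ℕ} (htot : Associated (algebraMap OK OL πK) (πL ^ n)) (hn : 0 < n)
    (G w : OK[X]) (hGn : G + C πK = X ^ n * w)
    (hGev : Polynomial.aeval πL G ∈ Ideal.span {πL ^ N}) :
    ∀ m, m ≤ N → ∀ f : OK[X], Polynomial.aeval πL f ∈ Ideal.span {πL ^ m} →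
      f ∈ Ideal.span {G, (X : OK[X]) ^ m} := by
  intro m
  induction m using Nat.strong_induction_on with
  | _ m ihm =>
    intro hmN f hf
    rcases Nat.eq_zero_or_pos m with rfl | hm
    · rw [Ideal.mem_span_pair]
      exact ⟨0, f, by simp⟩
    set r := min m n with hr
    have hrn : r ≤ n := min_le_right _ _
    have hrm : r ≤ m := min_le_left _ _
    have hrpos : 0 < r := lt_min hm hn
    set f₀ := f %ₘ ((X : OK[X]) ^ r) with hf₀
    set g := f /ₘ ((X : OK[X]) ^ r) with hg
    have hmod : f₀ + X ^ r * g = f := Polynomial.modByMonic_add_div f (X ^ r)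
    have hdeg : f₀.natDegree < r := by
      rcases eq_or_ne f₀ 0 with h0 | h0
      · rw [h0]; simpa using hrpos
      · have := Polynomial.degree_modByMonic_lt f (monic_X_pow (R := OK) r)
        rw [Polynomial.degree_X_pow] at this
        rw [← hf₀] at this
        exact Polynomial.natDegree_lt_iff_degree_lt h0 |>.mpr this
    -- f₀(πL) ∈ (πL ^ r)
    have hf₀ev : Polynomial.aeval πL f₀ ∈ Ideal.span {πL ^ r} := by
      have h1 : Polynomial.aeval πL f₀
          = Polynomial.aeval πL f - πL ^ r * Polynomial.aeval πL g := by
        have := congrArg (Polynomial.aeval πL) hmod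
        simp only [map_add, map_mul, map_pow, Polynomial.aeval_X] at this
        linear_combination this
      rw [h1]
      refine sub_mem ?_ (Ideal.mul_mem_right _ _ (Ideal.mem_span_singleton.mpr dvd_rfl))
      exact Ideal.span_singleton_le_span_singleton.mpr (pow_dvd_pow _ hrm) hf
    -- coefficients of f₀ are divisible by πK
    have hcoef : ∀ i, πK ∣ f₀.coeff i := by
      intro i
      rcases lt_or_ge i r with hir | hir
      · have hsum : Polynomial.aeval πL f₀
            = ∑ k ∈ Finset.range r, algebraMap OK OL (f₀.coeff k) * πL ^ k := by
          rw [Polynomial.aeval_eq_sum_range' hdeg]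
          exact Finset.sum_congr rfl fun k _ => Algebra.smul_def _ _
        have := digit_lemma πK hπK πL hπL htot r hrn (fun k => f₀.coeff k)
          (by rw [← hsum]; exact hf₀ev) i hir
        exact Ideal.mem_span_singleton.mp this
      · rw [Polynomial.coeff_eq_zero_of_natDegree_lt (lt_of_lt_of_le hdeg hir)]
        exact dvd_zero _
    obtain ⟨h, hh⟩ := (Polynomial.C_dvd_iff_dvd_coeff πK f₀).mpr hcoef
    -- key decomposition
    have hXn : (X : OK[X]) ^ n = X ^ r * X ^ (n - r) := by
      rw [← pow_add]; congr 1; omega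
    have key : f = X ^ r * (g + X ^ (n - r) * (w * h)) - G * h := by
      have hCpiK : (C πK : OK[X]) = X ^ n * w - G := by linear_combination hGn
      calc f = f₀ + X ^ r * g := hmod.symm
        _ = C πK * h + X ^ r * g := by rw [← hh]
        _ = (X ^ n * w - G) * h + X ^ r * g := by rw [hCpiK]
        _ = X ^ r * (g + X ^ (n - r) * (w * h)) - G * h := by rw [hXn]; ring
    rcases le_or_gt m n with hmn | hnm
    · -- r = m
      have hrm' : r = m := min_eq_left hmn
      rw [Ideal.mem_span_pair]
      exact ⟨-h, g + X ^ (n - r) * (w * h), by rw [← hrm']; linear_combination - key⟩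
    · -- r = n, recurse
      have hrn' : r = n := min_eq_right hnm.le
      set Q := g + X ^ (n - r) * (w * h) with hQ
      have hQev : Polynomial.aeval πL Q ∈ Ideal.span {πL ^ (m - n)} := by
        have h1 : πL ^ n * Polynomial.aeval πL Q
            = Polynomial.aeval πL f + Polynomial.aeval πL G * Polynomial.aeval πL h := by
          have := congrArg (Polynomial.aeval πL) key
          simp only [map_sub, map_add, map_mul, map_pow, Polynomial.aeval_X] at this
          rw [hrn'] at this
          linear_combination -this
        have h2 : πL ^ n * Polynomial.aeval πL Q ∈ Ideal.span {πL ^ m} := by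
          rw [h1]
          refine add_mem hf (Ideal.mul_mem_right _ _ ?_)
          exact Ideal.span_singleton_le_span_singleton.mpr (pow_dvd_pow _ hmN) hGev
        obtain ⟨y, hy⟩ := Ideal.mem_span_singleton.mp h2
        rw [Ideal.mem_span_singleton]
        refine ⟨y, ?_⟩
        have hm' : (m : ℕ) = n + (m - n) := by omega
        rw [hm', pow_add] at hy
        exact mul_left_cancel₀ (pow_ne_zero n hπL.ne_zero) (by linear_combination hy)
      have hrec := ihm (m - n) (by omega) (by omega) Q hQev
      rw [Ideal.mem_span_pair] at hrec ⊢
      obtain ⟨α, β, hαβ⟩ := hrec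
      refine ⟨X ^ n * α - h, β, ?_⟩
      have hXm : (X : OK[X]) ^ m = X ^ n * X ^ (m - n) := by
        rw [← pow_add]; congr 1; omega
      rw [hXm]
      rw [hrn'] at key
      linear_combination (X : OK[X]) ^ n * hαβ - key

end ClaimB

section Wlemmas
open Polynomial

variable {R : Type} [CommRing R]

/-- W1: binomial rearrangement in `R[ε]`. -/
lemma W1 (e N : ℕ) (cf : ℕ → R) (yb pb : R) (t : EpsRing R e) :
    (∑ i ∈ Finset.range N,
        epsC R e (cf i) * (epsC R e yb + epsC R e pb * eps R e * t) ^ i)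
      - (∑ i ∈ Finset.range N, epsC R e (cf i) * (epsC R e yb) ^ i)
    = ∑ k ∈ Finset.Ico 1 N,
        t ^ k * epsC R e (pb ^ k *
            ∑ i ∈ Finset.range N, (i.choose k) • (cf i * yb ^ (i - k)))
          * (eps R e) ^ k := by
  set Y := epsC R e yb with hY
  set δ := epsC R e pb * eps R e * t with hδ
  have hterm : ∀ i ∈ Finset.range N,
      epsC R e (cf i) * (Y + δ) ^ i - epsC R e (cf i) * Y ^ i
      = ∑ k ∈ Finset.Ico 1 N,
          epsC R e (cf i) * (δ ^ k * Y ^ (i - k) * ((i.choose k : ℕ) : EpsRing R e)) := by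
    intro i hi
    have hiN : i < N := Finset.mem_range.mp hi
    rw [add_comm Y δ, add_pow]
    rw [Finset.range_eq_Ico, Finset.sum_eq_sum_Ico_succ_bot (Nat.succ_pos i)]
    simp only [pow_zero, Nat.choose_zero_right, Nat.cast_one, one_mul, mul_one, Nat.sub_zero]
    have hext : (∑ k ∈ Finset.Ico 1 (i + 1),
          δ ^ k * Y ^ (i - k) * ((i.choose k : ℕ) : EpsRing R e))
        = ∑ k ∈ Finset.Ico 1 N, δ ^ k * Y ^ (i - k) * ((i.choose k : ℕ) : EpsRing R e) := by
      apply Finset.sum_subset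
      · intro k hk
        rw [Finset.mem_Ico] at hk ⊢
        omega
      · intro k _ hk'
        have hik : i < k := by
          by_contra hik
          exact hk' (Finset.mem_Ico.mpr ⟨by rcases Finset.mem_Ico.mp ‹k ∈ Finset.Ico 1 N› with ⟨h1, _⟩; exact h1, by omega⟩)
        rw [Nat.choose_eq_zero_of_lt hik, Nat.cast_zero, mul_zero]
    rw [hext, mul_add, Finset.mul_sum]
    ring
  rw [← Finset.sum_sub_distrib, Finset.sum_congr rfl hterm, Finset.sum_comm]
  refine Finset.sum_congr rfl fun k _ => ?_
  have hδk : δ ^ k = (epsC R e pb) ^ k * (eps R e) ^ k * t ^ k := by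
    rw [hδ, mul_pow, mul_pow]
  rw [map_mul, map_pow, map_sum]
  simp only [map_nsmul, map_mul, map_pow]
  simp only [Finset.mul_sum, Finset.sum_mul]
  refine Finset.sum_congr rfl fun i _ => ?_
  rw [hδk, nsmul_eq_mul]
  push_cast
  ring

/-- W2: coefficient extraction in `R[ε]`. -/
lemma W2 {e : ℕ} (he : 1 < e) (N : ℕ) (t : EpsRing R e)
    (ht : IsUnit t) (wc : ℕ → R) :
    (∑ k ∈ Finset.Ico 1 N, t ^ k * epsC R e (wc k) * eps R e ^ k = 0) ↔
    ∀ k, 1 ≤ k → k < N → k < e → wc k = 0 := by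
  constructor
  · intro h0
    obtain ⟨T, hT⟩ := EpsAux.emk_surj (A := R) (e := e) t
    have hT0 : IsUnit (T.coeff 0) := by
      obtain ⟨tu, htu⟩ := ht
      obtain ⟨T', hT'⟩ := EpsAux.emk_surj (A := R) (e := e) (↑tu⁻¹)
      have h1 : EpsAux.emk R e (T * T' - 1) = 0 := by
        rw [map_sub, map_mul, hT, hT', map_one, ← htu, Units.mul_inv, sub_self]
      rw [EpsAux.emk_eq_zero] at h1
      have h2 := Polynomial.X_pow_dvd_iff.mp h1 0 (by omega)
      rw [Polynomial.coeff_sub, Polynomial.mul_coeff_zero, Polynomial.coeff_one_zero,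
        sub_eq_zero] at h2
      exact IsUnit.of_mul_eq_one _ h2
    set P : Polynomial R := ∑ k ∈ Finset.Ico 1 N, T ^ k * C (wc k) * X ^ k with hP
    have hPemk : EpsAux.emk R e P = 0 := by
      rw [hP, map_sum, ← h0]
      refine Finset.sum_congr rfl fun k _ => ?_
      rw [map_mul, map_mul, map_pow, map_pow, hT]
      rfl
    rw [EpsAux.emk_eq_zero] at hPemk
    have hcoeff := Polynomial.X_pow_dvd_iff.mp hPemk
    intro k
    induction k using Nat.strong_induction_on with
    | _ k ihk =>
      intro hk1 hkN hke
      have hc := hcoeff k hke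
      rw [hP, Polynomial.finset_sum_coeff] at hc
      rw [Finset.sum_eq_single_of_mem k (Finset.mem_Ico.mpr ⟨hk1, hkN⟩) ?side] at hc
      case side =>
        intro k' hk' hne
        rw [Polynomial.coeff_mul_X_pow']
        split
        case isTrue hle =>
          have hk'lt : k' < k := lt_of_le_of_ne hle hne
          rw [ihk k' hk'lt (Finset.mem_Ico.mp hk').1 (Finset.mem_Ico.mp hk').2 (by omega),
            map_zero, mul_zero, Polynomial.coeff_zero]
        case isFalse => rfl
      rw [Polynomial.coeff_mul_X_pow', if_pos le_rfl, Nat.sub_self,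
        Polynomial.mul_coeff_zero, Polynomial.coeff_C_zero] at hc
      have h00 : (T ^ k).coeff 0 = (T.coeff 0) ^ k := by
        rw [Polynomial.coeff_zero_eq_eval_zero, Polynomial.eval_pow,
          ← Polynomial.coeff_zero_eq_eval_zero]
      rw [h00] at hc
      exact ((hT0.pow k).mul_right_eq_zero).mp hc
  · intro hz
    refine Finset.sum_eq_zero fun k hk => ?_
    rw [Finset.mem_Ico] at hk
    rcases lt_or_ge k e with hke | hek
    · rw [hz k hk.1 hk.2 hke, map_zero, mul_zero, zero_mul]
    · rw [EpsAux.eps_pow_eq_zero' (by omega) hek, mul_zero]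

end Wlemmas

section L7sec
open Polynomial

/-- L7: `π^{c+1}ε` is not in the bigger ideal. -/
lemma L7 {OL : Type} [CommRing OL] [IsDomain OL] (πL : OL) (hπL : Irreducible πL)
    {N c e : ℕ} (hcN : c + 2 ≤ N) (he : 1 < e) :
    (epsC (OL ⧸ Ideal.span {πL ^ N}) e (Ideal.Quotient.mk _ (πL ^ (c + 1)))
        * eps (OL ⧸ Ideal.span {πL ^ N}) e) ∉
      Ideal.span {epsC (OL ⧸ Ideal.span {πL ^ N}) e (Ideal.Quotient.mk _ (πL ^ (c + 1)))
          * eps (OL ⧸ Ideal.span {πL ^ N}) e} *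
        Ideal.span {epsC (OL ⧸ Ideal.span {πL ^ N}) e (Ideal.Quotient.mk _ πL),
          eps (OL ⧸ Ideal.span {πL ^ N}) e} := by
  set Bd := OL ⧸ Ideal.span {πL ^ N} with hBd
  set mkq : OL →+* Bd := Ideal.Quotient.mk _ with hmkq
  set aB : Bd := mkq (πL ^ (c + 1)) with haB
  set bB : Bd := mkq πL with hbB
  intro hmem
  rw [Ideal.span_mul_span', Set.singleton_mul, Set.image_pair, Ideal.mem_span_pair] at hmem
  obtain ⟨α, β, hαβ⟩ := hmem
  obtain ⟨A, rfl⟩ := EpsAux.emk_surj (A := Bd) (e := e) α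
  obtain ⟨B, rfl⟩ := EpsAux.emk_surj (A := Bd) (e := e) β
  have h0 : (X : Polynomial Bd) ^ e ∣
      (A * ((C aB * X) * C bB) + B * ((C aB * X) * X) - C aB * X) := by
    rw [← EpsAux.emk_eq_zero (e := e), map_sub, map_add, map_mul, map_mul, map_mul,
      map_mul, map_mul, sub_eq_zero]
    exact hαβ
  have e1 : A * ((C aB * X) * C bB) = (C aB * C bB * A) * X ^ 1 := by ring
  have e2 : B * ((C aB * X) * X) = (C aB * B) * X ^ 2 := by ring
  have e3 : (C aB : Polynomial Bd) * X = C aB * X ^ 1 := by ring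
  rw [e1, e2, e3] at h0
  have hco := Polynomial.X_pow_dvd_iff.mp h0 1 he
  rw [Polynomial.coeff_sub, Polynomial.coeff_add, Polynomial.coeff_mul_X_pow',
    Polynomial.coeff_mul_X_pow', Polynomial.coeff_mul_X_pow'] at hco
  simp only [le_refl, if_pos, Nat.sub_self] at hco
  rw [if_neg (by omega)] at hco
  simp only [Polynomial.mul_coeff_zero, Polynomial.coeff_C_zero] at hco
  -- hco : aB * bB * A.coeff 0 + 0 - aB = 0
  obtain ⟨t0, ht0⟩ := Ideal.Quotient.mk_surjective (A.coeff 0)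
  have hq0 : mkq (πL ^ (c + 1) * πL * t0 - πL ^ (c + 1)) = 0 := by
    rw [map_sub, map_mul, map_mul]
    rw [← haB, ← hbB, ht0]
    linear_combination hco
  rw [hmkq, Ideal.Quotient.eq_zero_iff_mem, Ideal.mem_span_singleton] at hq0
  obtain ⟨yy, hyy⟩ := hq0
  have hNsplit : πL ^ N = πL ^ (c + 1) * (πL * πL ^ (N - c - 2)) := by
    rw [← pow_succ', ← pow_add]
    congr 1
    omega
  rw [hNsplit] at hyy
  have hcanc : πL * t0 - 1 = πL * πL ^ (N - c - 2) * yy := by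
    apply mul_left_cancel₀ (pow_ne_zero (c + 1) hπL.ne_zero)
    linear_combination hyy
  have hone : πL * (t0 - πL ^ (N - c - 2) * yy) = 1 := by linear_combination hcanc
  exact hπL.not_isUnit (IsUnit.of_mul_eq_one _ hone)

end L7sec

open Polynomial in
set_option maxHeartbeats 2000000 in
/-- Proposition `series`.
`K` is a local field with perfect residue field of characteristic `p`, `L/K` a finite
separable totally ramified extension of degree `n = a·p^ν > 1` (`p ∤ a`).
`B_d = O_L/M_L^{n+d}`, `A_d` = image of `O_K` in `B_d`, and `B_d[ε_j] = B_d[ε]/(ε^{p^{j+1}})`.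
For `0 ≤ j ≤ ν`, `d ≥ c ≥ 0`, a unit `u ∈ O_L[ε_j]ˣ` and `F(X) ∈ X^n·O_K[[X]]` with
`F(π_L) = π_K`, the following are equivalent:
1. `F(π_L + u·π_L^{c+1}·ε_j) ≡ π_K (mod π_L^{n+d})`;
2. there is an `A_d`-algebra homomorphism `s_d : B_d → B_d[ε_j]` with
   `s_d(π_L) = π_L + u·π_L^{c+1}·ε_j`;
3. there is an `A_d`-algebra homomorphism `s_d : B_d → B_d[ε_j]` with
   `s_d ≡ id (mod π_L^{c+1} ε_j)` and `s_d ≢ id (mod π_L^{c+1} ε_j·(π_L, ε_j))`. -/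
theorem stmt2
    (p : ℕ) [hp : Fact p.Prime]
    (OK : Type) [CommRing OK] [IsDomain OK] [IsDiscreteValuationRing OK]
    [IsAdicComplete (IsLocalRing.maximalIdeal OK) OK]
    [CharP (IsLocalRing.ResidueField OK) p] [PerfectRing (IsLocalRing.ResidueField OK) p]
    (OL : Type) [CommRing OL] [IsDomain OL] [IsDiscreteValuationRing OL]
    [IsAdicComplete (IsLocalRing.maximalIdeal OL) OL]
    [Algebra OK OL]
    (K L : Type) [Field K] [Field L]
    [Algebra OK K] [IsFractionRing OK K]
    [Algebra OL L] [IsFractionRing OL L]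
    [Algebra K L] [Algebra OK L] [IsScalarTower OK K L] [IsScalarTower OK OL L]
    [Algebra.IsSeparable K L] [FiniteDimensional K L]
    (n a ν : ℕ) (hna : n = a * p ^ ν) (hpa : ¬ p ∣ a) (hn1 : 1 < n)
    (hdeg : Module.finrank K L = n)
    (πK : OK) (hπK : Irreducible πK) (πL : OL) (hπL : Irreducible πL)
    (htot : Associated (algebraMap OK OL πK) (πL ^ n))
    (hres : ∀ x : OL, ∃ y : OK, x - algebraMap OK OL y ∈ IsLocalRing.maximalIdeal OL)
    -- the data of the proposition
    (j : ℕ) (hj : j ≤ ν) (c d : ℕ) (hcd : c ≤ d)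
    (u : (EpsRing OL (p ^ (j + 1)))ˣ)
    (F : PowerSeries OK) (hFn : ∀ i < n, PowerSeries.coeff i F = 0)
    (hFeval : ∀ N : ℕ,
      algebraMap OK OL πK
          - ∑ i ∈ Finset.range N, algebraMap OK OL (PowerSeries.coeff i F) * πL ^ i
        ∈ Ideal.span {πL ^ N}) :
    -- abbreviations
    let e : ℕ := p ^ (j + 1)
    let ι : OL →+* EpsRing OL e := epsC OL e
    let z : EpsRing OL e := ι πL + (u : EpsRing OL e) * ι (πL ^ (c + 1)) * eps OL e
    let Bd := OL ⧸ (Ideal.span {πL ^ (n + d)})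
    let q : OL →+* Bd := Ideal.Quotient.mk _
    let ιB : Bd →+* EpsRing Bd e := epsC Bd e
    let Cond1 : Prop :=
      (∑ i ∈ Finset.range (n + d), ι (algebraMap OK OL (PowerSeries.coeff i F)) * z ^ i)
          - ι (algebraMap OK OL πK) ∈ Ideal.span {ι πL ^ (n + d)}
    let Cond2 : Prop :=
      ∃ s : Bd →+* EpsRing Bd e,
        (∀ x : OK, s (q (algebraMap OK OL x)) = ιB (q (algebraMap OK OL x))) ∧
        s (q πL) = epsMap q e z
    let Cond3 : Prop :=
      ∃ s : Bd →+* EpsRing Bd e,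
        (∀ x : OK, s (q (algebraMap OK OL x)) = ιB (q (algebraMap OK OL x))) ∧
        (∀ b : Bd, s b - ιB b ∈ Ideal.span {ιB (q (πL ^ (c + 1))) * eps Bd e}) ∧
        ¬ (∀ b : Bd, s b - ιB b ∈
              Ideal.span {ιB (q (πL ^ (c + 1))) * eps Bd e} *
                Ideal.span {ιB (q πL), eps Bd e})
    (Cond1 ↔ Cond2) ∧ (Cond2 ↔ Cond3) := by
  intro e ι z Bd q ιB Cond1 Cond2 Cond3
  classical
  obtain ⟨hp2⟩ := hp
  have hp2' : 2 ≤ p := hp2.two_le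
  have he1 : 1 < e := Nat.one_lt_pow (Nat.succ_ne_zero j) hp2'
  have he0 : 0 < e := by omega
  have hn0 : 0 < n := by omega
  -- basic facts about q
  have hq0 : q (πL ^ (n + d)) = 0 := by
    rw [Ideal.Quotient.eq_zero_iff_mem]
    exact Ideal.mem_span_singleton.mpr dvd_rfl
  have hqmem : ∀ x : OL, x ∈ Ideal.span {πL ^ (n + d)} → q x = 0 := fun x hx =>
    Ideal.Quotient.eq_zero_iff_mem.mpr hx
  have hqsurj : Function.Surjective q := Ideal.Quotient.mk_surjective
  -- the element z̄ and its pieces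
  set S := EpsRing Bd e with hS
  set y : S := ιB (q πL) with hy
  set ρ : S := ιB (q (πL ^ (c + 1))) with hρ
  set εB : S := eps Bd e with hεB
  set ub : S := epsMap q e (u : EpsRing OL e) with hub
  have hubU : IsUnit ub := u.isUnit.map (epsMap q e)
  have hmap : ∀ x : OL, epsMap q e (ι x) = ιB (q x) := fun x => EpsAux.epsMap_epsC q x
  have heps : epsMap q e (eps OL e) = εB := EpsAux.epsMap_eps q
  have hzbar : epsMap q e z = y + ub * ρ * εB := by
    show epsMap q e (ι πL + (u : EpsRing OL e) * ι (πL ^ (c + 1)) * eps OL e) = _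
    rw [map_add, map_mul, map_mul, hmap, hmap, heps]
  -- the relation in Bd
  have hrelB : (∑ i ∈ Finset.range (n + d),
        q (algebraMap OK OL (PowerSeries.coeff i F)) * (q πL) ^ i)
      = q (algebraMap OK OL πK) := by
    have h0 : q (algebraMap OK OL πK
        - ∑ i ∈ Finset.range (n + d),
            algebraMap OK OL (PowerSeries.coeff i F) * πL ^ i) = 0 :=
      hqmem _ (hFeval (n + d))
    rw [map_sub, sub_eq_zero, map_sum] at h0
    rw [h0]
    refine Finset.sum_congr rfl fun i _ => ?_
    rw [← map_pow, ← map_mul]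
  -- images of units under q stay units; nonunits of Bd are multiples of q πL
  have hBdnonunit : ∀ b : Bd, ¬ IsUnit b → b ∈ Ideal.span {q πL} := by
    intro b hb
    obtain ⟨x, rfl⟩ := hqsurj b
    have hx : ¬ IsUnit x := fun h => hb (h.map q)
    have : x ∈ IsLocalRing.maximalIdeal OL := by
      rw [IsLocalRing.mem_maximalIdeal]; exact hx
    rw [hπL.maximalIdeal_eq, Ideal.mem_span_singleton] at this
    obtain ⟨x', rfl⟩ := this
    rw [Ideal.mem_span_singleton, map_mul]
    exact Dvd.intro _ rfl
  -- applying an A_d-algebra hom to the B_d relation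
  have happly : ∀ s : Bd →+* S,
      (∀ x : OK, s (q (algebraMap OK OL x)) = ιB (q (algebraMap OK OL x))) →
      (∑ i ∈ Finset.range (n + d),
          ιB (q (algebraMap OK OL (PowerSeries.coeff i F))) * (s (q πL)) ^ i)
        = ιB (q (algebraMap OK OL πK)) := by
    intro s hsA
    have := congrArg s hrelB
    rw [map_sum] at this
    rw [← hsA πK, ← this]
    exact Finset.sum_congr rfl fun i _ => by rw [map_mul, map_pow, hsA]

  -- the polynomial G = trunc F - πK
  set G : OK[X] := (PowerSeries.trunc (n + d) F : OK[X]) - C πK with hG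
  have hXnw : (X : OK[X]) ^ n ∣ PowerSeries.trunc (n + d) F := by
    rw [Polynomial.X_pow_dvd_iff]
    intro i hi
    rw [PowerSeries.coeff_trunc]
    split
    · exact hFn i hi
    · rfl
  obtain ⟨w, hw⟩ := hXnw
  have hGw : G + C πK = X ^ n * w := by rw [hG, sub_add_cancel]; exact hw
  have htdeg : (PowerSeries.trunc (n + d) F).natDegree < n + d := by
    rcases eq_or_ne (PowerSeries.trunc (n + d) F) 0 with h0 | h0
    · rw [h0]; simpa using by omega
    · exact (Polynomial.natDegree_lt_iff_degree_lt h0).mpr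
        (PowerSeries.degree_trunc_lt F (n + d))
  have hev2 : ∀ {T : Type} [CommRing T] (f : OK →+* T) (x : T),
      Polynomial.eval₂ f x (PowerSeries.trunc (n + d) F)
        = ∑ i ∈ Finset.range (n + d), f (PowerSeries.coeff i F) * x ^ i := by
    intro T _ f x
    rw [Polynomial.eval₂_eq_sum_range' f htdeg x]
    refine Finset.sum_congr rfl fun i hi => ?_
    rw [PowerSeries.coeff_trunc, if_pos (Finset.mem_range.mp hi)]
  have hGev : Polynomial.aeval πL G ∈ Ideal.span {πL ^ (n + d)} := by
    rw [hG, map_sub, Polynomial.aeval_C, Polynomial.aeval_def, hev2]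
    rw [← neg_sub]
    exact neg_mem (hFeval (n + d))
  -- the evaluation maps
  set ΦB : OK[X] →+* Bd :=
    q.comp (Polynomial.aeval πL : OK[X] →ₐ[OK] OL).toRingHom with hΦBdef
  have hΦBC : ∀ x : OK, ΦB (C x) = q (algebraMap OK OL x) := fun x => by
    rw [hΦBdef, RingHom.comp_apply]
    show q (Polynomial.aeval πL (C x)) = _
    rw [Polynomial.aeval_C]
  have hΦBX : ΦB X = q πL := by
    rw [hΦBdef, RingHom.comp_apply]
    show q (Polynomial.aeval πL (X : OK[X])) = _
    rw [Polynomial.aeval_X]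
  have hΦBsurj : Function.Surjective ΦB := by
    intro b
    obtain ⟨x, rfl⟩ := hqsurj b
    obtain ⟨f, hf⟩ := poly_approx πL hπL hres (n + d) x
    refine ⟨f, ?_⟩
    rw [hΦBdef, RingHom.comp_apply]
    show Ideal.Quotient.mk _ (Polynomial.aeval πL f) = Ideal.Quotient.mk _ x
    rw [Ideal.Quotient.mk_eq_mk_iff_sub_mem]
    rw [← neg_sub x (Polynomial.aeval πL f)]
    exact neg_mem hf
  have hkermem : ∀ f : OK[X], ΦB f = 0 → f ∈ Ideal.span {G, (X : OK[X]) ^ (n + d)} := by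
    intro f hf
    apply mem_span_G_pow πK hπK πL hπL htot hn0 G w hGw hGev (n + d) le_rfl f
    rw [hΦBdef, RingHom.comp_apply, Ideal.Quotient.eq_zero_iff_mem] at hf
    exact hf
  -- Cond1 reformulated inside S
  set zb : S := epsMap q e z with hzbdef
  have hC1iff : Cond1 ↔
      ((∑ i ∈ Finset.range (n + d),
          ιB (q (algebraMap OK OL (PowerSeries.coeff i F))) * zb ^ i)
        = ιB (q (algebraMap OK OL πK))) := by
    have hxiff := EpsAux.epsMap_eq_zero_iff (e := e) q hqsurj (πL ^ (n + d)) Ideal.mk_ker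
      ((∑ i ∈ Finset.range (n + d),
          ι (algebraMap OK OL (PowerSeries.coeff i F)) * z ^ i)
        - ι (algebraMap OK OL πK))
    have hcomp : epsMap q e
        ((∑ i ∈ Finset.range (n + d),
            ι (algebraMap OK OL (PowerSeries.coeff i F)) * z ^ i)
          - ι (algebraMap OK OL πK))
        = (∑ i ∈ Finset.range (n + d),
            ιB (q (algebraMap OK OL (PowerSeries.coeff i F))) * zb ^ i)
          - ιB (q (algebraMap OK OL πK)) := by
      rw [map_sub, map_sum, hmap]
      congr 1
      exact Finset.sum_congr rfl fun i _ => by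
        rw [map_mul, map_pow, hmap, hzbdef]
    show ((∑ i ∈ Finset.range (n + d),
          ι (algebraMap OK OL (PowerSeries.coeff i F)) * z ^ i)
        - ι (algebraMap OK OL πK) ∈ Ideal.span {ι πL ^ (n + d)}) ↔ _
    rw [← map_pow]
    rw [← hxiff, hcomp, sub_eq_zero]

  -- z̄ is nilpotent of order ≤ n+d
  have hzN : zb ^ (n + d) = 0 := by
    have hsplitc : ι (πL ^ (c + 1)) = ι πL * ι (πL ^ c) := by
      rw [← map_mul, ← pow_succ']
    have hzfac : z = ι πL * (1 + (u : EpsRing OL e) * ι (πL ^ c) * eps OL e) := by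
      show ι πL + (u : EpsRing OL e) * ι (πL ^ (c + 1)) * eps OL e = _
      rw [hsplitc]
      ring
    rw [hzbdef, hzfac, map_mul, mul_pow, hmap, ← map_pow, ← map_pow, hq0]
    simp
  -- construction of the section from Cond1'
  have hC1'toC2 : ((∑ i ∈ Finset.range (n + d),
          ιB (q (algebraMap OK OL (PowerSeries.coeff i F))) * zb ^ i)
        = ιB (q (algebraMap OK OL πK))) → Cond2 := by
    intro h1
    set ψ : OK[X] →+* S :=
      Polynomial.eval₂RingHom (ιB.comp (q.comp (algebraMap OK OL))) zb with hψdef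
    have hψC : ∀ x : OK, ψ (C x) = ιB (q (algebraMap OK OL x)) := fun x => by
      rw [hψdef, Polynomial.coe_eval₂RingHom, Polynomial.eval₂_C]
      rfl
    have hψX : ψ X = zb := by
      rw [hψdef, Polynomial.coe_eval₂RingHom, Polynomial.eval₂_X]
    have hψG : ψ G = 0 := by
      have htr : ψ (PowerSeries.trunc (n + d) F : OK[X])
          = ∑ i ∈ Finset.range (n + d),
              ιB (q (algebraMap OK OL (PowerSeries.coeff i F))) * zb ^ i := by
        rw [hψdef, Polynomial.coe_eval₂RingHom, hev2]
        rfl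
      rw [hG, map_sub, htr, h1, hψC, sub_self]
    have hψXN : ψ (X ^ (n + d)) = 0 := by rw [map_pow, hψX, hzN]
    have hker' : ∀ f ∈ RingHom.ker ΦB, ψ f = 0 := by
      intro f hf
      have := hkermem f (RingHom.mem_ker.mp hf)
      rw [Ideal.mem_span_pair] at this
      obtain ⟨α, β, hαβ⟩ := this
      rw [← hαβ, map_add, map_mul, map_mul, hψG, hψXN, mul_zero, mul_zero, add_zero]
    set e1 := RingHom.quotientKerEquivOfSurjective hΦBsurj with he1def
    set s : Bd →+* S :=
      (Ideal.Quotient.lift (RingHom.ker ΦB) ψ hker').comp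
        (e1.symm : Bd ≃+* (OK[X] ⧸ RingHom.ker ΦB)).toRingHom with hsdef
    have hs : ∀ f : OK[X], s (ΦB f) = ψ f := by
      intro f
      have h1' : e1 (Ideal.Quotient.mk (RingHom.ker ΦB) f) = ΦB f :=
        RingHom.kerLift_mk ΦB f
      have h2 : e1.symm (ΦB f) = Ideal.Quotient.mk (RingHom.ker ΦB) f := by
        rw [← h1', RingEquiv.symm_apply_apply]
      show (Ideal.Quotient.lift (RingHom.ker ΦB) ψ hker') (e1.symm (ΦB f)) = ψ f
      rw [h2]
      exact Ideal.Quotient.lift_mk _ _ _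
    show ∃ s : Bd →+* S,
        (∀ x : OK, s (q (algebraMap OK OL x)) = ιB (q (algebraMap OK OL x))) ∧
        s (q πL) = epsMap q e z
    refine ⟨s, fun x => by rw [← hΦBC x, hs, hψC, hΦBC x], ?_⟩
    rw [← hΦBX, hs, hψX, hzbdef]
  -- Cond2 implies Cond1'
  have hC2toC1' : Cond2 → ((∑ i ∈ Finset.range (n + d),
          ιB (q (algebraMap OK OL (PowerSeries.coeff i F))) * zb ^ i)
        = ιB (q (algebraMap OK OL πK))) := by
    intro h2
    obtain ⟨s, hsA, hsπ⟩ := h2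
    have := happly s hsA
    rw [hsπ, ← hzbdef] at this
    exact this

  -- transport along the generating set: s ≡ ιB mod I once it holds on q πL
  have hsub : ∀ s : Bd →+* S,
      (∀ x : OK, s (q (algebraMap OK OL x)) = ιB (q (algebraMap OK OL x))) →
      ∀ I : Ideal S, s (q πL) - ιB (q πL) ∈ I → ∀ b : Bd, s b - ιB b ∈ I := by
    intro s hsA I hπmem b
    obtain ⟨f, rfl⟩ := hΦBsurj b
    induction f using Polynomial.induction_on with
    | C x => rw [hΦBC, hsA, sub_self]; exact I.zero_mem
    | add f g hf hg =>
      rw [map_add, map_add, map_add]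
      have : s (ΦB f) + s (ΦB g) - (ιB (ΦB f) + ιB (ΦB g))
          = (s (ΦB f) - ιB (ΦB f)) + (s (ΦB g) - ιB (ΦB g)) := by ring
      rw [this]
      exact add_mem hf hg
    | monomial k x hk =>
      have h1 : (C x : OK[X]) * X ^ (k + 1) = (C x * X ^ k) * X := by ring
      have hsplit : s (ΦB (C x * X ^ (k + 1))) - ιB (ΦB (C x * X ^ (k + 1)))
          = s (ΦB (C x * X ^ k)) * (s (q πL) - ιB (q πL))
            + ιB (q πL) * (s (ΦB (C x * X ^ k)) - ιB (ΦB (C x * X ^ k))) := by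
        rw [h1, map_mul ΦB (C x * X ^ k) X, hΦBX,
          map_mul s (ΦB (C x * X ^ k)) (q πL), map_mul ιB (ΦB (C x * X ^ k)) (q πL)]
        ring
      rw [hsplit]
      exact add_mem (I.mul_mem_left _ hπmem) (I.mul_mem_left _ hk)
  -- the relation in S
  have hrelS : (∑ i ∈ Finset.range (n + d),
        ιB (q (algebraMap OK OL (PowerSeries.coeff i F))) * y ^ i)
      = ιB (q (algebraMap OK OL πK)) := by
    have := congrArg ιB hrelB
    rw [map_sum] at this
    rw [← this]
    exact Finset.sum_congr rfl fun i _ => by rw [map_mul, map_pow, hy]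
  -- the invariant coefficients
  set wcoef : ℕ → Bd := fun k => (q πL ^ (c + 1)) ^ k *
      ∑ i ∈ Finset.range (n + d),
        (i.choose k) • (q (algebraMap OK OL (PowerSeries.coeff i F)) * (q πL) ^ (i - k))
    with hwcoef
  have hW : ∀ t : S, IsUnit t →
      ((∑ i ∈ Finset.range (n + d),
          ιB (q (algebraMap OK OL (PowerSeries.coeff i F))) * (y + ρ * εB * t) ^ i)
        = ιB (q (algebraMap OK OL πK)) ↔
      ∀ k, 1 ≤ k → k < n + d → k < e → wcoef k = 0) := by
    intro t ht
    have hW1 := W1 e (n + d) (fun i => q (algebraMap OK OL (PowerSeries.coeff i F)))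
      (q πL) (q πL ^ (c + 1)) t
    have hρy : ρ = ιB (q πL ^ (c + 1)) := by rw [hρ, map_pow]
    rw [← hrelS, ← sub_eq_zero]
    rw [hy, hρy]
    rw [hW1]
    exact W2 he1 (n + d) t ht wcoef
  -- Cond2 → Cond3
  have hC2toC3 : Cond2 → Cond3 := by
    intro h2
    obtain ⟨s, hsA, hsπ⟩ := h2
    have hπI : s (q πL) - ιB (q πL) ∈ Ideal.span {ρ * εB} := by
      rw [hsπ, ← hzbdef, hzbar]
      have harr : y + ub * ρ * εB - ιB (q πL) = ub * (ρ * εB) := by rw [hy]; ring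
      rw [harr]
      exact Ideal.mul_mem_left _ _ (Ideal.mem_span_singleton_self _)
    refine ⟨s, hsA, fun b => hsub s hsA _ hπI b, ?_⟩
    intro hall
    have h1 := hall (q πL)
    have harr : s (q πL) - ιB (q πL) = ub * (ρ * εB) := by
      rw [hsπ, ← hzbdef, hzbar, hy]; ring
    rw [harr] at h1
    obtain ⟨uu, huu⟩ := hubU
    have h3 : ρ * εB ∈ Ideal.span {ρ * εB} * Ideal.span {y, εB} := by
      have h4 : (↑uu⁻¹ : S) * (ub * (ρ * εB))
          ∈ Ideal.span {ρ * εB} * Ideal.span {y, εB} := Ideal.mul_mem_left _ _ h1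
      rw [← mul_assoc, ← huu, Units.inv_mul, one_mul] at h4
      exact h4
    have hρpow : ρ = ιB (q (πL ^ (c + 1))) := hρ
    have hcN : c + 2 ≤ n + d := by omega
    exact L7 πL hπL hcN he1 h3
  -- Cond3 → Cond2
  have hC3toC2 : Cond3 → Cond2 := by
    intro h3
    obtain ⟨s, hsA, hmem, hnot⟩ := h3
    have hv := hmem (q πL)
    rw [Ideal.mem_span_singleton] at hv
    obtain ⟨v, hveq⟩ := hv
    by_cases hvU : IsUnit v
    · -- the good case
      have hPv := happly s hsA
      have hsq : s (q πL) = y + ρ * εB * v := by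
        rw [hy]; linear_combination hveq
      rw [hsq] at hPv
      have h4 := (hW v hvU).mp hPv
      have h5 := (hW ub hubU).mpr h4
      apply hC1'toC2
      have hzb' : zb = y + ρ * εB * ub := by rw [hzbar]; ring
      rw [hzb']
      exact h5
    · -- v is not a unit: contradiction with hnot
      exfalso
      apply hnot
      have hvmem : v ∈ Ideal.span {y, εB} := by
        obtain ⟨V, rfl⟩ := EpsAux.emk_surj (A := Bd) (e := e) v
        have hdvd : (X : Polynomial Bd) ∣ (V - C (V.coeff 0)) :=
          Polynomial.X_dvd_iff.mpr (by simp)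
        obtain ⟨W, hWeq⟩ := hdvd
        have hdecomp : EpsAux.emk Bd e V
            = epsC Bd e (V.coeff 0) + eps Bd e * EpsAux.emk Bd e W := by
          rw [EpsAux.epsC_eq, EpsAux.eps_eq, ← map_mul, ← map_add]
          congr 1
          linear_combination hWeq
        have hV0 : ¬ IsUnit (V.coeff 0) := by
          intro hu
          apply hvU
          rw [hdecomp]
          refine IsNilpotent.isUnit_add_left_of_commute ?_ (hu.map (epsC Bd e))
            (Commute.all _ _)
          exact ⟨e, by rw [mul_pow, EpsAux.eps_pow_eq_zero he0, zero_mul]⟩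
        have h1 := hBdnonunit _ hV0
        rw [Ideal.mem_span_singleton] at h1
        obtain ⟨t0, ht0⟩ := h1
        rw [hdecomp, Ideal.mem_span_pair]
        exact ⟨ιB t0, EpsAux.emk Bd e W, by
          rw [ht0, map_mul, hy]; ring⟩
      intro b
      refine hsub s hsA _ ?_ b
      rw [hveq]
      exact Ideal.mul_mem_mul (Ideal.mem_span_singleton_self _) hvmem
  -- assemble
  constructor
  · exact hC1iff.trans ⟨hC1'toC2, hC2toC1'⟩
  · exact ⟨hC2toC3, hC3toC2⟩
end
end

section
/- Let p be a prime and let j, μ ≥ 0 be integers. In the polynomial ring ℤ[X_0, X_1, …, X_μ], one has the congruence (X_0 + X_1 + ⋯ + X_μ)^{p^j} ≡ X_0^{p^j} + X_1^{p^j} + ⋯ + X_μ^{p^j} modulo the ideal H_j' generated by the elements p^h · X_k^{p^{j−h}} · X_w for 1 ≤ h ≤ j, 0 ≤ k ≤ μ, 0 ≤ w ≤ μ. -/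
open MvPolynomial Finset

private noncomputable def HId (p j μ : ℕ) : Ideal (MvPolynomial (Fin (μ + 1)) ℤ) :=
  Ideal.span { f : MvPolynomial (Fin (μ + 1)) ℤ |
      ∃ h : ℕ, ∃ k w : Fin (μ + 1), 1 ≤ h ∧ h ≤ j ∧
        f = (p : MvPolynomial (Fin (μ + 1)) ℤ) ^ h * (X k) ^ (p ^ (j - h)) * X w }

private lemma HId_gen (p j μ : ℕ) (h : ℕ) (k w : Fin (μ + 1)) (h1 : 1 ≤ h) (h2 : h ≤ j) :
    (p : MvPolynomial (Fin (μ + 1)) ℤ) ^ h * (X k) ^ (p ^ (j - h)) * X w ∈ HId p j μ :=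
  Ideal.subset_span ⟨h, k, w, h1, h2, rfl⟩

private lemma HId_p_mul {p j μ : ℕ} {x : MvPolynomial (Fin (μ + 1)) ℤ}
    (hx : x ∈ HId p j μ) : (p : MvPolynomial (Fin (μ + 1)) ℤ) * x ∈ HId p (j + 1) μ := by
  induction hx using Submodule.span_induction with
  | mem f hf =>
      obtain ⟨h, k, w, h1, h2, rfl⟩ := hf
      have e : (p : MvPolynomial (Fin (μ + 1)) ℤ) *
          ((p : MvPolynomial (Fin (μ + 1)) ℤ) ^ h * (X k) ^ (p ^ (j - h)) * X w)
          = (p : MvPolynomial (Fin (μ + 1)) ℤ) ^ (h + 1) *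
            (X k) ^ (p ^ (j + 1 - (h + 1))) * X w := by
        rw [show j + 1 - (h + 1) = j - h from by omega]; ring
      rw [e]
      exact HId_gen p (j + 1) μ (h + 1) k w (by omega) (by omega)
  | zero => simp
  | add x y hx hy ihx ihy => rw [mul_add]; exact Ideal.add_mem _ ihx ihy
  | smul a x hx ih =>
      rw [smul_eq_mul, mul_left_comm]
      exact Ideal.mul_mem_left _ a ih

private lemma HId_dvd_p {p j μ : ℕ} {y : MvPolynomial (Fin (μ + 1)) ℤ}
    (hy : y ∈ HId p j μ) : ∃ z, y = (p : MvPolynomial (Fin (μ + 1)) ℤ) * z := by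
  have hle : HId p j μ ≤ Ideal.span {(p : MvPolynomial (Fin (μ + 1)) ℤ)} := by
    refine Ideal.span_le.2 ?_
    rintro f ⟨h, k, w, h1, h2, rfl⟩
    refine SetLike.mem_coe.2 (Ideal.mem_span_singleton.2 ?_)
    exact Dvd.dvd.mul_right (Dvd.dvd.mul_right (dvd_pow_self _ (by omega)) _) _
  obtain ⟨z, hz⟩ := Ideal.mem_span_singleton.1 (hle hy)
  exact ⟨z, hz⟩

private lemma HId_mul_mul {p j μ : ℕ} {x y : MvPolynomial (Fin (μ + 1)) ℤ}
    (hx : x ∈ HId p j μ) (hy : y ∈ HId p j μ) : x * y ∈ HId p (j + 1) μ := by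
  obtain ⟨z, rfl⟩ := HId_dvd_p hy
  have e : x * ((p : MvPolynomial (Fin (μ + 1)) ℤ) * z)
      = ((p : MvPolynomial (Fin (μ + 1)) ℤ) * x) * z := by ring
  rw [e]
  exact Ideal.mul_mem_right _ _ (HId_p_mul hx)

private lemma HId_frob_gen (p j μ : ℕ) (a w : Fin (μ + 1)) :
    (p : MvPolynomial (Fin (μ + 1)) ℤ) * (X a) ^ (p ^ j) * X w ∈ HId p (j + 1) μ := by
  have := HId_gen p (j + 1) μ 1 a w le_rfl (by omega)
  simpa using this

private lemma HId_frob_gen' (p j μ : ℕ) (hp : p.Prime) (a w : Fin (μ + 1)) :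
    (p : MvPolynomial (Fin (μ + 1)) ℤ) * ((X a) ^ (p ^ j) * (X w) ^ (p ^ j))
      ∈ HId p (j + 1) μ := by
  have h1 : 1 ≤ p ^ j := Nat.one_le_pow _ _ hp.pos
  have e : (X w : MvPolynomial (Fin (μ + 1)) ℤ) ^ (p ^ j)
      = X w ^ (p ^ j - 1) * X w := by
    conv_lhs => rw [show p ^ j = (p ^ j - 1) + 1 from by omega]
    rw [pow_succ]
  have e2 : (p : MvPolynomial (Fin (μ + 1)) ℤ) * ((X a) ^ (p ^ j) * (X w) ^ (p ^ j))
      = ((p : MvPolynomial (Fin (μ + 1)) ℤ) * (X a) ^ (p ^ j) * X w) *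
        (X w) ^ (p ^ j - 1) := by rw [e]; ring
  rw [e2]
  exact Ideal.mul_mem_right _ _ (HId_frob_gen p j μ a w)

private lemma HId_frob (p j μ : ℕ) (hp : p.Prime) (S : Finset (Fin (μ + 1))) :
    (∑ i ∈ S, (X i : MvPolynomial (Fin (μ + 1)) ℤ) ^ (p ^ j)) ^ p -
      ∑ i ∈ S, (X i : MvPolynomial (Fin (μ + 1)) ℤ) ^ (p ^ (j + 1)) ∈ HId p (j + 1) μ := by
  classical
  induction S using Finset.induction with
  | empty => simp [zero_pow hp.pos.ne']
  | insert a S ha ih =>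
      rw [Finset.sum_insert ha, Finset.sum_insert ha, add_pow_prime_eq' hp]
      have hxp : (((X a : MvPolynomial (Fin (μ + 1)) ℤ) ^ (p ^ j)) ^ p : _)
          = (X a) ^ (p ^ (j + 1)) := by rw [← pow_mul, ← pow_succ]
      set s : MvPolynomial (Fin (μ + 1)) ℤ := ∑ i ∈ S, (X i) ^ (p ^ j) with hs
      have hps : (p : MvPolynomial (Fin (μ + 1)) ℤ) * ((X a) ^ (p ^ j) * s)
          ∈ HId p (j + 1) μ := by
        rw [hs, Finset.mul_sum, Finset.mul_sum]
        exact Ideal.sum_mem _ fun w _ => HId_frob_gen' p j μ hp a w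
      have hsum : (p : MvPolynomial (Fin (μ + 1)) ℤ) *
          ∑ k ∈ Ioo 0 p, ((X a : MvPolynomial (Fin (μ + 1)) ℤ) ^ (p ^ j)) ^ k *
            s ^ (p - k) * ((p.choose k / p : ℕ) : MvPolynomial (Fin (μ + 1)) ℤ)
          ∈ HId p (j + 1) μ := by
        rw [Finset.mul_sum]
        refine Ideal.sum_mem _ fun k hk => ?_
        rw [Finset.mem_Ioo] at hk
        obtain ⟨k', rfl⟩ : ∃ k', k = k' + 1 := ⟨k - 1, by omega⟩
        obtain ⟨m, hm⟩ : ∃ m, p - (k' + 1) = m + 1 := ⟨p - k' - 2, by omega⟩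
        have hkey : (p : MvPolynomial (Fin (μ + 1)) ℤ) *
            (((X a : MvPolynomial (Fin (μ + 1)) ℤ) ^ (p ^ j)) ^ (k' + 1) *
              s ^ (p - (k' + 1)) * ((p.choose (k' + 1) / p : ℕ) : MvPolynomial (Fin (μ + 1)) ℤ))
            = ((p : MvPolynomial (Fin (μ + 1)) ℤ) * ((X a) ^ (p ^ j) * s)) *
              (((X a) ^ (p ^ j)) ^ k' * s ^ m *
                ((p.choose (k' + 1) / p : ℕ) : MvPolynomial (Fin (μ + 1)) ℤ)) := by
          rw [hm, pow_succ, pow_succ]; ring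
        rw [hkey]
        exact Ideal.mul_mem_right _ _ hps
      have goalEq : ((X a : MvPolynomial (Fin (μ + 1)) ℤ) ^ (p ^ j)) ^ p + s ^ p +
          (p : MvPolynomial (Fin (μ + 1)) ℤ) *
            ∑ k ∈ Ioo 0 p, ((X a) ^ (p ^ j)) ^ k * s ^ (p - k) *
              ((p.choose k / p : ℕ) : MvPolynomial (Fin (μ + 1)) ℤ) -
          ((X a) ^ (p ^ (j + 1)) + ∑ i ∈ S, (X i) ^ (p ^ (j + 1)))
          = (s ^ p - ∑ i ∈ S, (X i) ^ (p ^ (j + 1))) +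
            (p : MvPolynomial (Fin (μ + 1)) ℤ) *
            ∑ k ∈ Ioo 0 p, ((X a) ^ (p ^ j)) ^ k * s ^ (p - k) *
              ((p.choose k / p : ℕ) : MvPolynomial (Fin (μ + 1)) ℤ) := by
        rw [hxp]; ring
      rw [goalEq]
      exact Ideal.add_mem _ ih hsum

/-- Let `p` be a prime and `j, μ ≥ 0` integers.  In the polynomial
ring `ℤ[X_0, …, X_μ]` one has
`(X_0 + ⋯ + X_μ)^(p^j) ≡ X_0^(p^j) + ⋯ + X_μ^(p^j)` modulo the ideal `H_j'`
generated by the elements `p^h · X_k^(p^(j-h)) · X_w` for `1 ≤ h ≤ j` and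
`0 ≤ k, w ≤ μ`. -/
theorem stmt17 (p : ℕ) (hp : p.Prime) (j μ : ℕ) :
    (∑ i : Fin (μ + 1), (X i : MvPolynomial (Fin (μ + 1)) ℤ)) ^ (p ^ j) -
      ∑ i : Fin (μ + 1), (X i : MvPolynomial (Fin (μ + 1)) ℤ) ^ (p ^ j) ∈
    Ideal.span { f : MvPolynomial (Fin (μ + 1)) ℤ |
      ∃ h : ℕ, ∃ k w : Fin (μ + 1), 1 ≤ h ∧ h ≤ j ∧
        f = (p : MvPolynomial (Fin (μ + 1)) ℤ) ^ h * (X k) ^ (p ^ (j - h)) * X w } := by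
  show _ ∈ HId p j μ
  induction j with
  | zero => simp
  | succ j ih =>
      set T : MvPolynomial (Fin (μ + 1)) ℤ := ∑ i : Fin (μ + 1), (X i) ^ (p ^ j) with hT
      set E : MvPolynomial (Fin (μ + 1)) ℤ :=
        (∑ i : Fin (μ + 1), (X i)) ^ (p ^ j) - T with hE
      have hTE : (∑ i : Fin (μ + 1), (X i : MvPolynomial (Fin (μ + 1)) ℤ)) ^ (p ^ (j + 1))
          = (T + E) ^ p := by rw [hE, add_sub_cancel, ← pow_mul, ← pow_succ]
      rw [hTE, add_pow_prime_eq' hp]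
      have hEp : E ^ p ∈ HId p (j + 1) μ := by
        have h2 : 2 ≤ p := hp.two_le
        have e : E ^ p = (E * E) * E ^ (p - 2) := by
          rw [← pow_two, ← pow_add, show 2 + (p - 2) = p from by omega]
        rw [e]
        exact Ideal.mul_mem_right _ _ (HId_mul_mul ih ih)
      have hsum : (p : MvPolynomial (Fin (μ + 1)) ℤ) *
          ∑ k ∈ Ioo 0 p, T ^ k * E ^ (p - k) *
            ((p.choose k / p : ℕ) : MvPolynomial (Fin (μ + 1)) ℤ) ∈ HId p (j + 1) μ := by
        rw [Finset.mul_sum]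
        refine Ideal.sum_mem _ fun k hk => ?_
        rw [Finset.mem_Ioo] at hk
        obtain ⟨m, hm⟩ : ∃ m, p - k = m + 1 := ⟨p - k - 1, by omega⟩
        have hkey : (p : MvPolynomial (Fin (μ + 1)) ℤ) *
            (T ^ k * E ^ (p - k) * ((p.choose k / p : ℕ) : MvPolynomial (Fin (μ + 1)) ℤ))
            = ((p : MvPolynomial (Fin (μ + 1)) ℤ) * E) *
              (T ^ k * E ^ m * ((p.choose k / p : ℕ) : MvPolynomial (Fin (μ + 1)) ℤ)) := by
          rw [hm, pow_succ]; ring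
        rw [hkey]
        exact Ideal.mul_mem_right _ _ (HId_p_mul ih)
      have hfr : T ^ p - ∑ i : Fin (μ + 1), (X i : MvPolynomial (Fin (μ + 1)) ℤ) ^ (p ^ (j + 1))
          ∈ HId p (j + 1) μ := HId_frob p j μ hp Finset.univ
      have goalEq : T ^ p + E ^ p +
          (p : MvPolynomial (Fin (μ + 1)) ℤ) *
            ∑ k ∈ Ioo 0 p, T ^ k * E ^ (p - k) *
              ((p.choose k / p : ℕ) : MvPolynomial (Fin (μ + 1)) ℤ) -
          ∑ i : Fin (μ + 1), (X i : MvPolynomial (Fin (μ + 1)) ℤ) ^ (p ^ (j + 1))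
          = (T ^ p - ∑ i : Fin (μ + 1), (X i) ^ (p ^ (j + 1))) + E ^ p +
            (p : MvPolynomial (Fin (μ + 1)) ℤ) *
            ∑ k ∈ Ioo 0 p, T ^ k * E ^ (p - k) *
              ((p.choose k / p : ℕ) : MvPolynomial (Fin (μ + 1)) ℤ) := by ring
      rw [goalEq]
      exact Ideal.add_mem _ (Ideal.add_mem _ hfr hEp) hsum
end

section
/- One has F̂(π_L(1+ε)) ≡ π_K modulo the ideal π_L^n · I_F of O_L[[ε]], where I_F is the ideal generated by π_L^{i_0} ε, π_L^{i_1} ε^p, …, π_L^{i_ν} ε^{p^ν}. Equivalently, there exist r_0,…,r_ν ∈ R and δ_F ∈ (π_L, ε)·I_F such that F̂(π_L(1+ε)) = π_K·(1 + Σ_{j=0}^{ν} r_j π_L^{i_j} ε^{p^j} + δ_F). -/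
open scoped ENNReal

noncomputable section

lemma vp_choose_aux (p : ℕ) [Fact p.Prime] (m i : ℕ) (hi : 1 ≤ i) (him : i ≤ m) :
    padicValNat p m ≤ padicValNat p (m.choose i) + padicValNat p i := by
  obtain ⟨m, rfl⟩ : ∃ m', m = m' + 1 := ⟨m - 1, by omega⟩
  obtain ⟨i, rfl⟩ : ∃ i', i = i' + 1 := ⟨i - 1, by omega⟩
  have key : (m + 1) * m.choose i = (m + 1).choose (i + 1) * (i + 1) := Nat.add_one_mul_choose_eq m i
  have h1 : m.choose i ≠ 0 := (Nat.choose_pos (by omega)).ne'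
  have h2 : (m + 1).choose (i + 1) ≠ 0 := (Nat.choose_pos him).ne'
  have := congrArg (padicValNat p) key
  rw [padicValNat.mul (by omega) h1, padicValNat.mul h2 (by omega)] at this
  omega

lemma piVal_top {A : Type*} [CommRing A] {π x : A}
    (h : piVal π x = ⊤) (k : ℕ) : x ∈ Ideal.span {π ^ k} := by
  by_contra hk
  have hle : piVal π x ≤ (k : ℕ∞) := by
    refine iSup₂_le fun m hm => ?_
    have hmk : m < k := by
      by_contra hmk
      exact hk (Ideal.mem_span_singleton.2 (dvd_trans (pow_dvd_pow π (by omega))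
        (Ideal.mem_span_singleton.1 hm)))
    exact_mod_cast hmk.le
  rw [h] at hle
  exact (lt_irrefl _ (lt_of_le_of_lt hle (by exact_mod_cast WithTop.coe_lt_top k))).elim

lemma piVal_coe {A : Type*} [CommRing A] {π x : A} {v : ℕ}
    (h : piVal π x = (v : ℕ∞)) : π ^ v ∣ x := by
  rw [← Ideal.mem_span_singleton]
  by_contra hv
  have h0 : x ∈ Ideal.span {π ^ 0} := Ideal.mem_span_singleton.2 (by simp)
  have hv1 : 1 ≤ v := by
    rcases Nat.eq_zero_or_pos v with h' | h'
    · exact absurd (h' ▸ hv) (fun c => c h0)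
    · exact h'
  have hle : piVal π x ≤ ((v - 1 : ℕ) : ℕ∞) := by
    refine iSup₂_le fun m hm => ?_
    have hmk : m < v := by
      by_contra hmk
      exact hv (Ideal.mem_span_singleton.2 (dvd_trans (pow_dvd_pow π (by omega))
        (Ideal.mem_span_singleton.1 hm)))
    exact_mod_cast by omega
  rw [h] at hle
  have : v ≤ v - 1 := by exact_mod_cast hle
  omega

lemma mem_span_CXpow {A : Type*} [CommRing A] (c : A) (k : ℕ) (f : PowerSeries A)
    (h0 : ∀ i < k, PowerSeries.coeff (R := A) i f = 0) (hdvd : ∀ i, c ∣ PowerSeries.coeff (R := A) i f) :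
    ∃ g, f = PowerSeries.C (R := A) c * PowerSeries.X ^ k * g := by
  obtain ⟨g1, hg1⟩ := PowerSeries.X_pow_dvd_iff.2 h0
  have hco : ∀ d, PowerSeries.coeff (R := A) d g1 = PowerSeries.coeff (R := A) (d + k) f := by
    intro d; rw [hg1, PowerSeries.coeff_X_pow_mul]
  have hdvd' : ∀ d, ∃ e, PowerSeries.coeff (R := A) d g1 = c * e := by
    intro d; rw [hco]; exact (hdvd (d + k)).imp fun e he => he
  choose e he using hdvd'
  refine ⟨PowerSeries.mk e, ?_⟩
  rw [hg1]
  rw [mul_comm (PowerSeries.C (R := A) c), mul_assoc]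
  congr 1
  ext d
  rw [PowerSeries.coeff_C_mul, PowerSeries.coeff_mk, ← he]

open PowerSeries in
/-- One has `F̂(π_L(1+ε)) ≡ π_K` modulo the ideal `π_L^n·I_F` of
`O_L[[ε]]`, where `I_F = (π_L^{i_0} ε, π_L^{i_1} ε^p, …, π_L^{i_ν} ε^{p^ν})`.
Equivalently, there exist `r_0, …, r_ν ∈ R` and `δ_F ∈ (π_L, ε)·I_F` such that
`F̂(π_L(1+ε)) = π_K·(1 + Σ_{j} r_j π_L^{i_j} ε^{p^j} + δ_F)`. -/
theorem stmt18
    (p : ℕ) [hp : Fact p.Prime]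
    -- the ring of integers of K : complete DVR with perfect residue field of char p
    (OK : Type) [CommRing OK] [IsDomain OK] [IsDiscreteValuationRing OK]
    [IsAdicComplete (IsLocalRing.maximalIdeal OK) OK]
    [CharP (IsLocalRing.ResidueField OK) p] [PerfectRing (IsLocalRing.ResidueField OK) p]
    -- the ring of integers of L
    (OL : Type) [CommRing OL] [IsDomain OL] [IsDiscreteValuationRing OL]
    [IsAdicComplete (IsLocalRing.maximalIdeal OL) OL]
    [Algebra OK OL]
    -- the fields K and L
    (K L : Type) [Field K] [Field L]
    [Algebra OK K] [IsFractionRing OK K]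
    [Algebra OL L] [IsFractionRing OL L]
    [Algebra K L] [Algebra OK L] [IsScalarTower OK K L] [IsScalarTower OK OL L]
    -- L/K is finite separable of degree n = a·p^ν with p ∤ a, n > 1
    [Algebra.IsSeparable K L] [FiniteDimensional K L]
    (n a ν : ℕ) (hna : n = a * p ^ ν) (hpa : ¬ p ∣ a) (hn1 : 1 < n)
    (hdeg : Module.finrank K L = n)
    -- uniformizers; L/K is totally ramified
    (πK : OK) (hπK : Irreducible πK) (πL : OL) (hπL : Irreducible πL)
    (htot : Associated (algebraMap OK OL πK) (πL ^ n))
    (hres : ∀ x : OL, ∃ y : OK, x - algebraMap OK OL y ∈ IsLocalRing.maximalIdeal OL)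
    -- Teichmüller representatives
    (TR : Set OK) (hTR0 : (0 : OK) ∈ TR)
    (hTRbij : Set.BijOn (IsLocalRing.residue OK) TR Set.univ)
    (hTRmul : ∀ r ∈ TR, ∀ s ∈ TR, r * s ∈ TR)
    -- the series F̂(X) = Σ_h a_h X^{h+n} with π_K = F̂(π_L)
    (aF : ℕ → OK) (haF : ∀ h, aF h ∈ TR)
    (hFeval : ∀ N : ℕ,
      algebraMap OK OL πK - ∑ h ∈ Finset.range N, algebraMap OK OL (aF h) * πL ^ (h + n)
        ∈ Ideal.span {πL ^ (n + N)})
    -- the indices of inseparability (finite since L/K is separable)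
    (iL : ℕ → ℕ)
    (hiL : ∀ j ≤ ν, (iL j : ℕ∞) = insepIdx p n ν aF (piVal πL (p : OL)) j)
    -- FF = F̂(π_L(1+ε)) ∈ O_L[[ε]], coefficientwise (as a π_L-adic limit)
    (FF : PowerSeries OL)
    (hFFcoeff : ∀ i N : ℕ,
      PowerSeries.coeff (R := OL) i FF
          - ∑ t ∈ Finset.range N,
              algebraMap OK OL (aF t) * πL ^ (t + n) * ((t + n).choose i : OL)
        ∈ Ideal.span {πL ^ (n + N)}) :
    (FF - (C (R := OL)) (algebraMap OK OL πK) ∈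
        Ideal.span {(C (R := OL)) (πL ^ n)} *
          Ideal.span {f : PowerSeries OL | ∃ j ≤ ν,
            f = (C (R := OL)) (πL ^ iL j) * (X : PowerSeries OL) ^ (p ^ j)}) ∧
    (∃ r : ℕ → OK, (∀ j ≤ ν, r j ∈ TR) ∧
      ∃ δF ∈ Ideal.span {(C (R := OL)) πL, (X : PowerSeries OL)} *
          Ideal.span {f : PowerSeries OL | ∃ j ≤ ν,
            f = (C (R := OL)) (πL ^ iL j) * (X : PowerSeries OL) ^ (p ^ j)},
        FF = (C (R := OL)) (algebraMap OK OL πK) *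
          (1 + ∑ j ∈ Finset.range (ν + 1),
              (C (R := OL)) (algebraMap OK OL (r j) * πL ^ iL j) * (X : PowerSeries OL) ^ (p ^ j)
            + δF)) := by

  classical
  have hp2 : 2 ≤ p := hp.out.two_le
  have hπL0 : πL ≠ 0 := hπL.ne_zero
  have hmL : IsLocalRing.maximalIdeal OL = Ideal.span {πL} :=
    (IsDiscreteValuationRing.irreducible_iff_uniformizer πL).mp hπL
  have hmK : IsLocalRing.maximalIdeal OK = Ideal.span {πK} :=
    (IsDiscreteValuationRing.irreducible_iff_uniformizer πK).mp hπK
  have hcap : ∀ x : OL, (∀ k : ℕ, x ∈ Ideal.span {πL ^ k}) → x = 0 := by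
    intro x hx
    refine IsHausdorff.haus (inferInstance : IsHausdorff (IsLocalRing.maximalIdeal OL) OL)
      x fun k => ?_
    rw [SModEq.zero, Ideal.smul_eq_mul, Ideal.mul_top, hmL, Ideal.span_singleton_pow]
    exact hx k
  obtain ⟨u, hu⟩ := htot
  have hn0 : n ≠ 0 := by omega
  have hπKeq : algebraMap OK OL πK = πL ^ n * ↑u⁻¹ := by
    rw [← hu, mul_assoc]; simp
  have ha0 : aF 0 ≠ 0 := by
    intro h0
    have h1 := hFeval 1
    rw [Finset.sum_range_one, h0, map_zero, zero_mul, sub_zero, Ideal.mem_span_singleton,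
      hπKeq] at h1
    have h2 : πL ^ n * πL ∣ πL ^ n * ↑u⁻¹ := by
      rw [← pow_succ]; exact h1
    have h3 : πL ∣ (↑u⁻¹ : OL) := (mul_dvd_mul_iff_left (pow_ne_zero n hπL0)).mp h2
    exact hπL.not_isUnit (isUnit_of_dvd_unit h3 (Units.isUnit _))
  have ha' : a ≠ 0 := by rintro rfl; exact hpa (dvd_zero p)
  have hvpn : padicValNat p n = ν := by
    rw [hna, padicValNat.mul ha' (pow_ne_zero _ hp.out.pos.ne'),
      padicValNat.eq_zero_of_not_dvd hpa, padicValNat.prime_pow, zero_add]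
  have hitν : itilde p n aF ν = 0 := by
    refine le_antisymm ?_ zero_le
    have hmem : (0 : ℕ) ∈ {h : ℕ | padicValNat p (h + n) ≤ ν ∧ aF h ≠ 0} :=
      ⟨by simp [hvpn], ha0⟩
    have h0 : itilde p n aF ν ≤ ((0 : ℕ) : ℕ∞) := iInf₂_le 0 hmem
    simpa using h0
  have hiLν : iL ν = 0 := by
    have h := hiL ν le_rfl
    rw [insepIdx, Set.Icc_self] at h
    simp only [Set.mem_singleton_iff, iInf_iInf_eq_left, Nat.sub_self, Nat.cast_zero,
      zero_mul, add_zero, hitν] at h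
    exact_mod_cast h
  have hiLle : ∀ j, j ≤ ν → ∀ j1, j ≤ j1 → j1 ≤ ν →
      (iL j : ℕ∞) ≤ itilde p n aF j1 + ((j1 - j : ℕ) : ℕ∞) * piVal πL (p : OL) := by
    intro j hj j1 h1 h2
    rw [hiL j hj, insepIdx]
    exact iInf₂_le j1 ⟨h1, h2⟩
  have hitle : ∀ j1 t, padicValNat p (t + n) ≤ j1 → aF t ≠ 0 →
      itilde p n aF j1 ≤ (t : ℕ∞) := fun j1 t h1 h2 => iInf₂_le t ⟨h1, h2⟩
  -- key divisibility for individual terms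
  have hterm : ∀ j, j ≤ ν → ∀ i, 1 ≤ i → padicValNat p i ≤ j → ∀ t,
      algebraMap OK OL (aF t) * πL ^ (t + n) * (((t + n).choose i : ℕ) : OL)
        ∈ Ideal.span {πL ^ (n + iL j)} := by
    intro j hj i hi1 hvi t
    by_cases hat : aF t = 0
    · simp [hat]
    rw [Ideal.mem_span_singleton]
    have main : (πL : OL) ^ (iL j) ∣ πL ^ t * (((t + n).choose i : ℕ) : OL) := by
      set e := padicValNat p (t + n) with he
      set j1 := max j (min e ν) with hj1def
      have hjj1 : j ≤ j1 := le_max_left _ _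
      have hj1ν : j1 ≤ ν := max_le hj (min_le_right _ _)
      have hit : itilde p n aF j1 ≤ (t : ℕ∞) := by
        by_cases hej1 : e ≤ j1
        · exact hitle j1 t hej1 hat
        · have hj1ν' : j1 = ν := by omega
          rw [hj1ν', hitν]; exact zero_le
      have hkey : (iL j : ℕ∞) ≤ (t : ℕ∞) + ((j1 - j : ℕ) : ℕ∞) * piVal πL (p : OL) :=
        (hiLle j hj j1 hjj1 hj1ν).trans (add_le_add_left hit _)
      have hch : p ^ (j1 - j) ∣ (t + n).choose i := by
        rcases Nat.eq_or_lt_of_le hjj1 with heq | hlt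
        · simp [← heq]
        · have hj1e : j1 ≤ e := by omega
          by_cases him : i ≤ t + n
          · have hvc := vp_choose_aux p (t + n) i hi1 him
            have hcne : (t + n).choose i ≠ 0 := (Nat.choose_pos him).ne'
            rw [padicValNat_dvd_iff_le hcne]
            omega
          · rw [Nat.choose_eq_zero_of_lt (by omega)]
            exact dvd_zero _
      obtain ⟨M, hM⟩ := hch
      have hMc : (((t + n).choose i : ℕ) : OL) = (p : OL) ^ (j1 - j) * (M : OL) := by
        exact_mod_cast congrArg (Nat.cast : ℕ → OL) hM
      rw [hMc, ← mul_assoc]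
      refine Dvd.dvd.mul_right ?_ _
      by_cases hle : iL j ≤ t
      · exact Dvd.dvd.mul_right (pow_dvd_pow πL hle) _
      · have hdp : πL ^ (iL j - t) ∣ (p : OL) ^ (j1 - j) := by
          cases hv : piVal πL (p : OL) with
          | top =>
            have hp0 : (p : OL) = 0 := hcap _ (piVal_top hv)
            have hj1j : j1 - j ≠ 0 := by
              intro hz
              rw [hz, Nat.cast_zero, zero_mul, add_zero] at hkey
              exact hle (by exact_mod_cast hkey)
            rw [hp0, zero_pow hj1j]
            exact dvd_zero _
          | coe v =>
            have hdv : πL ^ v ∣ (p : OL) := piVal_coe hv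
            have hnat : iL j ≤ t + (j1 - j) * v := by
              rw [hv] at hkey
              have : (iL j : ℕ∞) ≤ ((t + (j1 - j) * v : ℕ) : ℕ∞) := by
                push_cast
                exact hkey
              exact_mod_cast this
            calc πL ^ (iL j - t) ∣ πL ^ ((j1 - j) * v) := pow_dvd_pow _ (by omega)
              _ = (πL ^ v) ^ (j1 - j) := by rw [← pow_mul, mul_comm]
              _ ∣ (p : OL) ^ (j1 - j) := pow_dvd_pow_of_dvd hdv _
        calc πL ^ (iL j) = πL ^ t * πL ^ (iL j - t) := by rw [← pow_add]; congr 1; omega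
          _ ∣ πL ^ t * (p : OL) ^ (j1 - j) := mul_dvd_mul_left _ hdp
    have hrw : algebraMap OK OL (aF t) * πL ^ (t + n) * (((t + n).choose i : ℕ) : OL)
        = algebraMap OK OL (aF t) * (πL ^ n * (πL ^ t * (((t + n).choose i : ℕ) : OL))) := by
      rw [pow_add]; ring
    rw [hrw, pow_add]
    exact Dvd.dvd.mul_left (mul_dvd_mul_left _ main) _
  have hspanmono : ∀ (k N : ℕ), k ≤ N →
      Ideal.span ({πL ^ N} : Set OL) ≤ Ideal.span {πL ^ k} :=
    fun k N h => Ideal.span_singleton_le_span_singleton.2 (pow_dvd_pow _ h)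
  have hd0 : PowerSeries.coeff (R := OL) 0 FF = algebraMap OK OL πK := by
    rw [← sub_eq_zero]
    apply hcap
    intro k
    have h1 := hFFcoeff 0 k
    have h2 := hFeval k
    simp only [Nat.choose_zero_right, Nat.cast_one, mul_one] at h1
    have h3 := Ideal.sub_mem _ h1 h2
    rw [sub_sub_sub_cancel_right] at h3
    exact hspanmono k (n + k) (by omega) h3
  have hcoeff : ∀ j, j ≤ ν → ∀ i, 1 ≤ i → (j = ν ∨ padicValNat p i ≤ j) →
      PowerSeries.coeff (R := OL) i FF ∈ Ideal.span {πL ^ (n + iL j)} := by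
    intro j hj i hi1 hcase
    have h1 := hFFcoeff i (iL j)
    have hsum : (∑ t ∈ Finset.range (iL j),
        algebraMap OK OL (aF t) * πL ^ (t + n) * ((t + n).choose i : OL))
        ∈ Ideal.span {πL ^ (n + iL j)} := by
      refine Ideal.sum_mem _ fun t _ => ?_
      rcases hcase with h | h
      · subst h
        rw [hiLν, Ideal.mem_span_singleton]
        exact (Dvd.dvd.mul_left (pow_dvd_pow πL (by omega)) _).mul_right _
      · exact hterm j hj i hi1 h t
    have h4 := Ideal.add_mem _ h1 hsum
    rwa [sub_add_cancel] at h4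
  -- slice decomposition
  set d : PowerSeries OL := FF - PowerSeries.C (R := OL) (algebraMap OK OL πK) with hd
  set hps : ℕ → PowerSeries OL := fun j => PowerSeries.mk
    (fun i => if 1 ≤ i ∧ min ν (Nat.log p i) = j then PowerSeries.coeff (R := OL) i d else 0)
    with hhps
  have hdc0 : PowerSeries.coeff (R := OL) 0 d = 0 := by
    have h0 := hd0
    rw [PowerSeries.coeff_zero_eq_constantCoeff] at h0
    simp [hd, h0]
  have hdci : ∀ i, 1 ≤ i → PowerSeries.coeff (R := OL) i d = PowerSeries.coeff (R := OL) i FF := by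
    intro i hi
    simp [hd, PowerSeries.coeff_C, Nat.one_le_iff_ne_zero.mp hi]
  have hJpow : ∀ i, 1 ≤ i → p ^ (min ν (Nat.log p i)) ≤ i := by
    intro i hi
    calc p ^ min ν (Nat.log p i) ≤ p ^ Nat.log p i :=
          Nat.pow_le_pow_right (by omega) (min_le_right _ _)
      _ ≤ i := Nat.pow_log_le_self p (by omega)
  have hdsum : d = ∑ j ∈ Finset.range (ν + 1), hps j := by
    ext i
    rw [map_sum]
    simp only [hhps, PowerSeries.coeff_mk]
    rcases Nat.eq_zero_or_pos i with rfl | hi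
    · simp [hdc0]
    · have h1 : 1 ≤ i := hi
      simp only [h1, true_and]
      rw [Finset.sum_ite_eq]
      simp [Nat.lt_succ_iff]
  have hex : ∀ j, ∃ g, j ≤ ν →
      hps j = PowerSeries.C (R := OL) (πL ^ (n + iL j)) * PowerSeries.X ^ (p ^ j) * g := by
    intro j
    by_cases hj : j ≤ ν
    · have h0 : ∀ i < p ^ j, PowerSeries.coeff (R := OL) i (hps j) = 0 := by
        intro i hi
        simp only [hhps, PowerSeries.coeff_mk]
        rw [if_neg]
        rintro ⟨hi1, hmin⟩
        have h2 := hJpow i hi1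
        rw [hmin] at h2
        omega
      have hdvd : ∀ i, πL ^ (n + iL j) ∣ PowerSeries.coeff (R := OL) i (hps j) := by
        intro i
        simp only [hhps, PowerSeries.coeff_mk]
        split_ifs with h
        · obtain ⟨hi1, hmin⟩ := h
          rw [hdci i hi1, ← Ideal.mem_span_singleton]
          refine hcoeff j hj i hi1 ?_
          by_cases hjν : j = ν
          · exact Or.inl hjν
          · refine Or.inr ?_
            have hlog : min ν (Nat.log p i) = Nat.log p i := by omega
            have := padicValNat_le_nat_log (p := p) i
            omega
        · exact dvd_zero _
      obtain ⟨g, hg⟩ := mem_span_CXpow (πL ^ (n + iL j)) (p ^ j) (hps j) h0 hdvd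
      exact ⟨g, fun _ => hg⟩
    · exact ⟨0, fun h => absurd h hj⟩
  choose g hg using hex
  have hdeq : d = ∑ j ∈ Finset.range (ν + 1),
      PowerSeries.C (R := OL) (πL ^ (n + iL j)) * PowerSeries.X ^ (p ^ j) * g j := by
    rw [hdsum]
    exact Finset.sum_congr rfl fun j hj => hg j (by simpa [Nat.lt_succ_iff] using hj)
  constructor
  · rw [hdeq]
    refine Ideal.sum_mem _ fun j hj => ?_
    have hjν : j ≤ ν := by simpa [Nat.lt_succ_iff] using hj
    have h1 : PowerSeries.C (R := OL) (πL ^ n) ∈ Ideal.span {PowerSeries.C (R := OL) (πL ^ n)} :=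
      Ideal.mem_span_singleton_self _
    have h2 : PowerSeries.C (R := OL) (πL ^ iL j) * PowerSeries.X ^ (p ^ j) ∈
        Ideal.span {f : PowerSeries OL | ∃ j' ≤ ν,
          f = PowerSeries.C (R := OL) (πL ^ iL j') * (PowerSeries.X : PowerSeries OL) ^ (p ^ j')} :=
      Ideal.subset_span ⟨j, hjν, rfl⟩
    have h4 := Ideal.mul_mem_right (g j) _ (Ideal.mul_mem_mul h1 h2)
    have h5 : PowerSeries.C (R := OL) (πL ^ (n + iL j)) * PowerSeries.X ^ (p ^ j) * g j
        = PowerSeries.C (R := OL) (πL ^ n) * (PowerSeries.C (R := OL) (πL ^ iL j)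
          * PowerSeries.X ^ (p ^ j)) * g j := by
      rw [pow_add, map_mul]; ring
    rw [h5]
    exact h4
  · -- second part
    have hrex : ∀ j, ∃ rz : OK × OL, rz.1 ∈ TR ∧
        ↑u * PowerSeries.constantCoeff (R := OL) (g j) - algebraMap OK OL rz.1 = πL * rz.2 := by
      intro j
      obtain ⟨y, hy⟩ := hres (↑u * PowerSeries.constantCoeff (R := OL) (g j))
      obtain ⟨r0, hrTR, hry⟩ := hTRbij.surjOn (Set.mem_univ (IsLocalRing.residue OK y))
      have h1 : y - r0 ∈ IsLocalRing.maximalIdeal OK := by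
        have : IsLocalRing.residue OK y = IsLocalRing.residue OK r0 := hry.symm
        exact (Ideal.Quotient.eq (I := IsLocalRing.maximalIdeal OK)).mp this
      rw [hmK, Ideal.mem_span_singleton] at h1
      obtain ⟨z0, hz0⟩ := h1
      rw [hmL, Ideal.mem_span_singleton] at hy
      obtain ⟨w1, hw1⟩ := hy
      refine ⟨(r0, w1 + πL ^ (n - 1) * ↑u⁻¹ * algebraMap OK OL z0), hrTR, ?_⟩
      have hn1 : n - 1 + 1 = n := by omega
      calc ↑u * PowerSeries.constantCoeff (R := OL) (g j) - algebraMap OK OL r0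
          = (↑u * PowerSeries.constantCoeff (R := OL) (g j) - algebraMap OK OL y)
            + algebraMap OK OL (y - r0) := by rw [map_sub]; ring
        _ = πL * (w1 + πL ^ (n - 1) * ↑u⁻¹ * algebraMap OK OL z0) := by
            have hpow : πL ^ n = πL ^ (n - 1) * πL := by rw [← pow_succ, hn1]
            rw [hw1, hz0, map_mul, hπKeq, hpow]; ring
    choose rz hrzTR hrzeq using hrex
    refine ⟨fun j => (rz j).1, fun j _ => hrzTR j, ?_⟩
    refine ⟨∑ j ∈ Finset.range (ν + 1),
      ((PowerSeries.C (R := OL) πL * PowerSeries.C (R := OL) (rz j).2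
        + PowerSeries.X * (PowerSeries.C (R := OL) ↑u
          * PowerSeries.mk (fun m => PowerSeries.coeff (R := OL) (m + 1) (g j))))
        * (PowerSeries.C (R := OL) (πL ^ iL j) * PowerSeries.X ^ (p ^ j))), ?_, ?_⟩
    · refine Ideal.sum_mem _ fun j hj => ?_
      have hjν : j ≤ ν := by simpa [Nat.lt_succ_iff] using hj
      refine Ideal.mul_mem_mul ?_ (Ideal.subset_span ⟨j, hjν, rfl⟩)
      refine Ideal.add_mem _ ?_ ?_
      · exact Ideal.mul_mem_right _ _ (Ideal.subset_span (Set.mem_insert _ _))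
      · exact Ideal.mul_mem_right _ _ (Ideal.subset_span (Set.mem_insert_of_mem _ rfl))
    · -- the equation
      have hFFd : FF = PowerSeries.C (R := OL) (algebraMap OK OL πK) + d := by rw [hd]; ring
      rw [hFFd, hdeq, mul_add, mul_add, mul_one, Finset.mul_sum, Finset.mul_sum,
        add_assoc, ← Finset.sum_add_distrib]
      congr 1
      refine Finset.sum_congr rfl fun j hj => ?_
      have hCu : PowerSeries.C (R := OL) (algebraMap OK OL πK) * PowerSeries.C (R := OL) ↑u
          = PowerSeries.C (R := OL) (πL ^ n) := by
        rw [← map_mul, hu]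
      have hCpow : PowerSeries.C (R := OL) (πL ^ (n + iL j))
          = PowerSeries.C (R := OL) (πL ^ n) * PowerSeries.C (R := OL) (πL ^ iL j) := by
        rw [← map_mul, ← pow_add]
      have hCr : PowerSeries.C (R := OL) (algebraMap OK OL (rz j).1)
          = PowerSeries.C (R := OL) ↑u * PowerSeries.C (R := OL) (PowerSeries.constantCoeff (R := OL) (g j))
            - PowerSeries.C (R := OL) πL * PowerSeries.C (R := OL) (rz j).2 := by
        rw [← map_mul, ← map_mul, ← map_sub]
        congr 1
        linear_combination -hrzeq j
      set cj := PowerSeries.constantCoeff (R := OL) (g j) with hcj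
      set sj := PowerSeries.mk (fun m => PowerSeries.coeff (R := OL) (m + 1) (g j)) with hsj
      have hexp : g j = PowerSeries.X * sj + PowerSeries.C (R := OL) cj :=
        PowerSeries.eq_X_mul_shift_add_const (g j)
      rw [hCpow, ← hCu, map_mul, hCr, hexp]
      ring
end
end
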